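/- arXiv:1607.00350 — 7 statements merged into one kernel-verified Lean document; each statement's English description precedes it below -/
import Mathlib

section
/- The maximal operator S_max f = -f''|_{x≠0} + f_r(0) q₁ − f'_r(0) q₂ on W²₂(ℝ\{0}) satisfies the Green identity (S_max f, g) − (f, S_max g) = (Γ₁f)·Γ₀g − (Γ₀f)·Γ₁g for all f, g in the domain, where Γ₀f = (f_r(0), −f'_r(0))ᵗ and Γ₁f = (f'_s(0) − (q₁, f), f_s(0) − (q₂, f))ᵗ. -/
open MeasureTheory Filter Set Complex

/-- An element of `W²₂(ℝ \ {0})`: a function together with its first and second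
derivatives away from `0`, square-integrability of `f` and `f''`, and one-sided
boundary values `f(0±)`, `f'(0±)` at the origin. -/
structure W22 where
  f : ℝ → ℂ
  d1 : ℝ → ℂ
  d2 : ℝ → ℂ
  hd1 : ∀ x : ℝ, x ≠ 0 → HasDerivAt f (d1 x) x
  hd2 : ∀ x : ℝ, x ≠ 0 → HasDerivAt d1 (d2 x) x
  l2f : MemLp f 2 (volume : Measure ℝ)
  l2d1 : MemLp d1 2 (volume : Measure ℝ)
  l2d2 : MemLp d2 2 (volume : Measure ℝ)
  fp : ℂ
  fm : ℂ
  dp : ℂ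
  dm : ℂ
  hfp : Tendsto f (nhdsWithin 0 (Set.Ioi 0)) (nhds fp)
  hfm : Tendsto f (nhdsWithin 0 (Set.Iio 0)) (nhds fm)
  hdp : Tendsto d1 (nhdsWithin 0 (Set.Ioi 0)) (nhds dp)
  hdm : Tendsto d1 (nhdsWithin 0 (Set.Iio 0)) (nhds dm)

/-- Mean value `f_r(0)`. -/
noncomputable def W22.fr (u : W22) : ℂ := (u.fp + u.fm) / 2
/-- Jump `f_s(0)`. -/
def W22.fs (u : W22) : ℂ := u.fp - u.fm
/-- Mean value `f'_r(0)`. -/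
noncomputable def W22.dr (u : W22) : ℂ := (u.dp + u.dm) / 2
/-- Jump `f'_s(0)`. -/
def W22.ds (u : W22) : ℂ := u.dp - u.dm

/-- The `L²` inner product `(g, f) = ∫ g* f`, linear in the second argument. -/
noncomputable def ip (g f : ℝ → ℂ) : ℂ := ∫ x : ℝ, (starRingEnd ℂ) (g x) * f x

/-- Action of the maximal operator `S_max f = -f''|_{x≠0} + f_r(0) q₁ - f'_r(0) q₂`. -/
noncomputable def Smax (q₁ q₂ : ℝ → ℂ) (u : W22) : ℝ → ℂ :=
  fun x => -(u.d2 x) + u.fr * q₁ x - u.dr * q₂ x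

/-- Boundary map `Γ₀ f = (f_r(0), -f'_r(0))`. -/
noncomputable def Γ0 (u : W22) : ℂ × ℂ := (u.fr, -u.dr)

/-- Boundary map `Γ₁ f = (f'_s(0) - (q₁, f), f_s(0) - (q₂, f))`. -/
noncomputable def Γ1 (q₁ q₂ : ℝ → ℂ) (u : W22) : ℂ × ℂ :=
  (u.ds - ip q₁ u.f, u.fs - ip q₂ u.f)

section Aux

local notation "cj" => starRingEnd ℂ

/-- Product of two L² functions (one conjugated) is integrable. -/
lemma l2_mul_integrable {f g : ℝ → ℂ} (hf : MemLp f 2 (volume : Measure ℝ))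
    (hg : MemLp g 2 (volume : Measure ℝ)) :
    Integrable (fun x => cj (f x) * g x) (volume : Measure ℝ) := by
  have hcf : MemLp (fun x => cj (f x)) 2 (volume : Measure ℝ) := by
    refine ⟨(continuous_star.comp_aestronglyMeasurable hf.1), ?_⟩
    have h0 : (fun x => cj (f x)) = (starRingEnd (ℝ → ℂ)) f := rfl
    rw [h0, eLpNorm_conj]
    exact hf.2
  have h := hg.smul hcf (p := 2) (q := 2) (r := 1)
  rw [memLp_one_iff_integrable] at h
  exact h

/-- The core Green identity: integral of the Wronskian-type derivative. -/
lemma green_core (u v : W22) :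
    ∫ x : ℝ, (cj (u.d2 x) * v.f x - cj (u.f x) * v.d2 x)
      = (cj u.dm * v.fm - cj u.fm * v.dm) - (cj u.dp * v.fp - cj u.fp * v.dp) := by
  set W : ℝ → ℂ := fun x => cj (u.d1 x) * v.f x - cj (u.f x) * v.d1 x with hWdef
  set W' : ℝ → ℂ := fun x => cj (u.d2 x) * v.f x - cj (u.f x) * v.d2 x with hW'def
  set Lp : ℂ := cj u.dp * v.fp - cj u.fp * v.dp with hLpdef
  set Lm : ℂ := cj u.dm * v.fm - cj u.fm * v.dm with hLmdef
  have hW : ∀ x : ℝ, x ≠ 0 → HasDerivAt W (W' x) x := by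
    intro x hx
    have A := ((u.hd2 x hx).star).mul (v.hd1 x hx)
    have B := ((u.hd1 x hx).star).mul (v.hd2 x hx)
    have C := A.sub B
    simp only [hWdef, hW'def, starRingEnd_apply]
    refine C.congr_deriv ?_
    ring
  have hWint : Integrable W (volume : Measure ℝ) :=
    (l2_mul_integrable u.l2d1 v.l2f).sub (l2_mul_integrable u.l2f v.l2d1)
  have hW'int : Integrable W' (volume : Measure ℝ) :=
    (l2_mul_integrable u.l2d2 v.l2f).sub (l2_mul_integrable u.l2f v.l2d2)
  have htop : Tendsto W atTop (nhds 0) := by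
    have A := tendsto_limUnder_of_hasDerivAt_of_integrableOn_Ioi (a := 1) (f := W) (f' := W')
      (fun x hx => hW x (ne_of_gt (lt_trans zero_lt_one hx))) hW'int.integrableOn
    have hz : limUnder atTop W = 0 := by
      apply IntegrableAtFilter.eq_zero_of_tendsto ⟨Set.univ, univ_mem, hWint.integrableOn⟩ ?_ A
      intro s hs
      rcases mem_atTop_sets.1 hs with ⟨b, hb⟩
      rw [← top_le_iff, ← Real.volume_Ici (a := b)]
      exact measure_mono hb
    rwa [hz] at A
  have hbot : Tendsto W atBot (nhds 0) := by
    have A := tendsto_limUnder_of_hasDerivAt_of_integrableOn_Iic (a := -1) (f := W) (f' := W')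
      (fun x hx => hW x (ne_of_lt (lt_of_le_of_lt hx (by norm_num)))) hW'int.integrableOn
    have hz : limUnder atBot W = 0 := by
      apply IntegrableAtFilter.eq_zero_of_tendsto ⟨Set.univ, univ_mem, hWint.integrableOn⟩ ?_ A
      intro s hs
      rcases mem_atBot_sets.1 hs with ⟨b, hb⟩
      rw [← top_le_iff, ← Real.volume_Iic (a := b)]
      exact measure_mono hb
    rwa [hz] at A
  have hLptend : Tendsto W (nhdsWithin 0 (Set.Ioi 0)) (nhds Lp) :=
    ((u.hdp.star.mul v.hfp).sub (u.hfp.star.mul v.hdp))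
  have hLmtend : Tendsto W (nhdsWithin 0 (Set.Iio 0)) (nhds Lm) :=
    ((u.hdm.star.mul v.hfm).sub (u.hfm.star.mul v.hdm))
  have hIoi : ∫ x in Set.Ioi (0:ℝ), W' x = -Lp := by
    have key : ∫ x in Set.Ioi (0:ℝ), W' x = 0 - (Function.update W 0 Lp) 0 := by
      apply integral_Ioi_of_hasDerivAt_of_tendsto
      · show ContinuousWithinAt (Function.update W 0 Lp) (Set.Ici 0) 0
        unfold ContinuousWithinAt
        rw [Function.update_self]
        have hU : Set.Ici (0:ℝ) = Set.Ioi 0 ∪ {0} := (Set.Ioi_union_left).symm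
        rw [hU, nhdsWithin_union]
        refine Tendsto.sup ?_ ?_
        · refine Tendsto.congr' ?_ hLptend
          filter_upwards [self_mem_nhdsWithin] with x hx
          rw [Function.update_of_ne (ne_of_gt hx)]
        · rw [nhdsWithin_singleton]
          simpa [Function.update_self] using
            tendsto_pure_nhds (Function.update W 0 Lp) 0
      · intro x hx
        have heq : Function.update W 0 Lp =ᶠ[nhds x] W := by
          filter_upwards [eventually_ne_nhds (ne_of_gt hx)] with y hy
          rw [Function.update_of_ne hy]
        exact (hW x (ne_of_gt hx)).congr_of_eventuallyEq heq
      · exact hW'int.integrableOn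
      · refine Tendsto.congr' ?_ htop
        filter_upwards [eventually_ne_atTop (0:ℝ)] with y hy
        rw [Function.update_of_ne hy]
    rw [key, Function.update_self, zero_sub]
  have hIic : ∫ x in Set.Iic (0:ℝ), W' x = Lm := by
    have key : ∫ x in Set.Iic (0:ℝ), W' x = (Function.update W 0 Lm) 0 - 0 := by
      apply integral_Iic_of_hasDerivAt_of_tendsto
      · show ContinuousWithinAt (Function.update W 0 Lm) (Set.Iic 0) 0
        unfold ContinuousWithinAt
        rw [Function.update_self]
        have hU : Set.Iic (0:ℝ) = Set.Iio 0 ∪ {0} := (Set.Iio_union_right).symm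
        rw [hU, nhdsWithin_union]
        refine Tendsto.sup ?_ ?_
        · refine Tendsto.congr' ?_ hLmtend
          filter_upwards [self_mem_nhdsWithin] with x hx
          rw [Function.update_of_ne (ne_of_lt hx)]
        · rw [nhdsWithin_singleton]
          simpa [Function.update_self] using
            tendsto_pure_nhds (Function.update W 0 Lm) 0
      · intro x hx
        have heq : Function.update W 0 Lm =ᶠ[nhds x] W := by
          filter_upwards [eventually_ne_nhds (ne_of_lt hx)] with y hy
          rw [Function.update_of_ne hy]
        exact (hW x (ne_of_lt hx)).congr_of_eventuallyEq heq
      · exact hW'int.integrableOn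
      · refine Tendsto.congr' ?_ hbot
        filter_upwards [eventually_ne_atBot (0:ℝ)] with y hy
        rw [Function.update_of_ne hy]
    rw [key, Function.update_self, sub_zero]
  have hsplit := intervalIntegral.integral_Iic_add_Ioi (b := (0:ℝ)) (μ := volume)
    hW'int.integrableOn hW'int.integrableOn
  show (∫ x : ℝ, W' x) = Lm - Lp
  rw [← hsplit, hIic, hIoi]
  ring

lemma ip_conj_swap (f g : ℝ → ℂ) : ip f g = cj (ip g f) := by
  unfold ip
  rw [← integral_conj]
  congr 1
  funext x
  simp [map_mul]
  ring

end Aux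

/-- the Green identity
`(S_max f, g) - (f, S_max g) = (Γ₁ f)·(Γ₀ g) - (Γ₀ f)·(Γ₁ g)` for all `f, g ∈ W²₂(ℝ\{0})`,
where `x·y = x₁* y₁ + x₂* y₂` is the inner product of `ℂ²`. -/

theorem stmt4 (q₁ q₂ : ℝ → ℂ)
    (hq₁ : MemLp q₁ 2 (volume : Measure ℝ)) (hq₂ : MemLp q₂ 2 (volume : Measure ℝ))
    (hq₁pc : ∃ s : Finset ℝ, ∀ x ∉ s, ContinuousAt q₁ x)
    (hq₂pc : ∃ s : Finset ℝ, ∀ x ∉ s, ContinuousAt q₂ x)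
    (u v : W22) :
    ip (Smax q₁ q₂ u) v.f - ip u.f (Smax q₁ q₂ v)
      = ((starRingEnd ℂ) (Γ1 q₁ q₂ u).1 * (Γ0 v).1
          + (starRingEnd ℂ) (Γ1 q₁ q₂ u).2 * (Γ0 v).2)
        - ((starRingEnd ℂ) (Γ0 u).1 * (Γ1 q₁ q₂ v).1
          + (starRingEnd ℂ) (Γ0 u).2 * (Γ1 q₁ q₂ v).2) := by
  classical
  have hconj1 : ip u.f q₁ = (starRingEnd ℂ) (ip q₁ u.f) := ip_conj_swap u.f q₁
  have hconj2 : ip u.f q₂ = (starRingEnd ℂ) (ip q₂ u.f) := ip_conj_swap u.f q₂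
  have e1 : ip (Smax q₁ q₂ u) v.f
      = -(∫ x : ℝ, (starRingEnd ℂ) (u.d2 x) * v.f x)
        + (starRingEnd ℂ) u.fr * ip q₁ v.f - (starRingEnd ℂ) u.dr * ip q₂ v.f := by
    unfold ip Smax
    have hfun : (fun x => (starRingEnd ℂ) (-(u.d2 x) + u.fr * q₁ x - u.dr * q₂ x) * v.f x)
        = fun x => (-((starRingEnd ℂ) (u.d2 x) * v.f x)
            + (starRingEnd ℂ) u.fr * ((starRingEnd ℂ) (q₁ x) * v.f x))
            - (starRingEnd ℂ) u.dr * ((starRingEnd ℂ) (q₂ x) * v.f x) := by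
      funext x
      simp only [map_add, map_sub, map_neg, map_mul]
      ring
    rw [hfun, integral_sub, integral_add, integral_neg, integral_const_mul, integral_const_mul]
    · exact (l2_mul_integrable u.l2d2 v.l2f).neg
    · exact (l2_mul_integrable hq₁ v.l2f).const_mul _
    · exact ((l2_mul_integrable u.l2d2 v.l2f).neg.add
        ((l2_mul_integrable hq₁ v.l2f).const_mul _))
    · exact (l2_mul_integrable hq₂ v.l2f).const_mul _
  have e2 : ip u.f (Smax q₁ q₂ v)
      = -(∫ x : ℝ, (starRingEnd ℂ) (u.f x) * v.d2 x)
        + v.fr * ip u.f q₁ - v.dr * ip u.f q₂ := by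
    unfold ip Smax
    have hfun : (fun x => (starRingEnd ℂ) (u.f x) * (-(v.d2 x) + v.fr * q₁ x - v.dr * q₂ x))
        = fun x => (-((starRingEnd ℂ) (u.f x) * v.d2 x)
            + v.fr * ((starRingEnd ℂ) (u.f x) * q₁ x))
            - v.dr * ((starRingEnd ℂ) (u.f x) * q₂ x) := by
      funext x
      ring
    rw [hfun, integral_sub, integral_add, integral_neg, integral_const_mul, integral_const_mul]
    · exact (l2_mul_integrable u.l2f v.l2d2).neg
    · exact (l2_mul_integrable u.l2f hq₁).const_mul _
    · exact ((l2_mul_integrable u.l2f v.l2d2).neg.add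
        ((l2_mul_integrable u.l2f hq₁).const_mul _))
    · exact (l2_mul_integrable u.l2f hq₂).const_mul _
  have hsub : (∫ x : ℝ, (starRingEnd ℂ) (u.d2 x) * v.f x)
      - (∫ x : ℝ, (starRingEnd ℂ) (u.f x) * v.d2 x)
      = ((starRingEnd ℂ) u.dm * v.fm - (starRingEnd ℂ) u.fm * v.dm)
        - ((starRingEnd ℂ) u.dp * v.fp - (starRingEnd ℂ) u.fp * v.dp) := by
    rw [← integral_sub (l2_mul_integrable u.l2d2 v.l2f) (l2_mul_integrable u.l2f v.l2d2)]
    exact green_core u v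
  rw [e1, e2, hconj1, hconj2]
  simp only [Γ0, Γ1, W22.fr, W22.dr, W22.fs, W22.ds, map_sub, map_add, map_div₀, map_neg,
    map_ofNat]
  linear_combination (-(1:ℂ)) * hsub
end

section
/- For any vectors h₀, h₁ ∈ ℂ², there exists f ∈ W²₂(ℝ\{0}) such that Γ₀f = h₀ and Γ₁f = h₁, where Γ₀f = (f_r(0), −f'_r(0))ᵗ and Γ₁f = (f'_s(0) − (q₁,f), f_s(0) − (q₂,f))ᵗ; i.e., the map (Γ₀,Γ₁) : W²₂(ℝ\{0}) → ℂ² ⊕ ℂ² is surjective. -/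
open MeasureTheory Filter Set Complex

/-- Gaussian factor `e^{-t x²}` as a complex-valued function of a real variable. -/
noncomputable def Ee (t x : ℝ) : ℂ := ((Real.exp (-(t * x ^ 2)) : ℝ) : ℂ)

lemma norm_Ee (t x : ℝ) : ‖Ee t x‖ = Real.exp (-(t * x ^ 2)) := by
  rw [Ee, Complex.norm_real, Real.norm_eq_abs, abs_of_pos (Real.exp_pos _)]

lemma Ee_zero (t : ℝ) : Ee t 0 = 1 := by simp [Ee]

lemma continuous_Ee (t : ℝ) : Continuous (Ee t) := by
  unfold Ee; fun_prop

lemma hasDerivAt_Ee (t x : ℝ) :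
    HasDerivAt (Ee t) (((-(2 * t * x) : ℝ) : ℂ) * Ee t x) x := by
  have h1 : HasDerivAt (fun y : ℝ => -(t * y ^ 2)) (-(t * (2 * x))) x := by
    have h := (((hasDerivAt_pow 2 x).const_mul t).neg)
    simp at h
    exact h
  have h2 := h1.exp
  have h3 := h2.ofReal_comp
  convert h3 using 1
  · rfl
  rw [Ee]; push_cast; ring

/-- The function `(α + βx) e^{-t x²}`. -/
noncomputable def FF (α β : ℂ) (t : ℝ) (x : ℝ) : ℂ := (α + β * x) * Ee t x

/-- First derivative of `FF`. -/
noncomputable def FF1 (α β : ℂ) (t : ℝ) (x : ℝ) : ℂ :=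
  β * Ee t x + (α + β * x) * (((-(2 * t * x) : ℝ) : ℂ) * Ee t x)

/-- Second derivative of `FF`. -/
noncomputable def FF2 (α β : ℂ) (t : ℝ) (x : ℝ) : ℂ :=
  β * (((-(2 * t * x) : ℝ) : ℂ) * Ee t x) +
    (β * (((-(2 * t * x) : ℝ) : ℂ) * Ee t x) +
      (α + β * x) * (((-(2 * t) : ℝ) : ℂ) * Ee t x +
        ((-(2 * t * x) : ℝ) : ℂ) * (((-(2 * t * x) : ℝ) : ℂ) * Ee t x)))

lemma hasDerivAt_id_c (x : ℝ) : HasDerivAt (fun y : ℝ => (y : ℂ)) 1 x := by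
  have h := Complex.ofRealCLM.hasDerivAt (x := x)
  simp at h
  exact h

lemma hasDerivAt_lin (α β : ℂ) (x : ℝ) :
    HasDerivAt (fun y : ℝ => α + β * (y : ℂ)) β x := by
  simpa using ((hasDerivAt_id_c x).const_mul β).const_add α

lemma hasDerivAt_FF (α β : ℂ) (t x : ℝ) : HasDerivAt (FF α β t) (FF1 α β t x) x := by
  exact (hasDerivAt_lin α β x).mul (hasDerivAt_Ee t x)

lemma hasDerivAt_coef (t x : ℝ) :
    HasDerivAt (fun y : ℝ => ((-(2 * t * y) : ℝ) : ℂ)) ((-(2 * t) : ℝ) : ℂ) x := by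
  have h : HasDerivAt (fun y : ℝ => -(2 * t * y)) (-(2 * t)) x := by
    have h := ((hasDerivAt_id x).const_mul (2 * t)).neg
    simp at h
    exact h
  exact h.ofReal_comp

lemma hasDerivAt_FF1 (α β : ℂ) (t x : ℝ) : HasDerivAt (FF1 α β t) (FF2 α β t x) x := by
  have h1 : HasDerivAt (fun y : ℝ => β * Ee t y)
      (β * (((-(2 * t * x) : ℝ) : ℂ) * Ee t x)) x := (hasDerivAt_Ee t x).const_mul β
  have hge : HasDerivAt (fun y : ℝ => ((-(2 * t * y) : ℝ) : ℂ) * Ee t y)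
      (((-(2 * t) : ℝ) : ℂ) * Ee t x +
        ((-(2 * t * x) : ℝ) : ℂ) * (((-(2 * t * x) : ℝ) : ℂ) * Ee t x)) x :=
    (hasDerivAt_coef t x).mul (hasDerivAt_Ee t x)
  exact h1.add ((hasDerivAt_lin α β x).mul hge)

lemma continuous_FF (α β : ℂ) (t : ℝ) : Continuous (FF α β t) := by
  unfold FF; have := continuous_Ee t; fun_prop

lemma continuous_FF1 (α β : ℂ) (t : ℝ) : Continuous (FF1 α β t) := by
  unfold FF1; have := continuous_Ee t; fun_prop

lemma FF_zero (α β : ℂ) (t : ℝ) : FF α β t 0 = α := by simp [FF, Ee_zero]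

lemma FF1_zero (α β : ℂ) (t : ℝ) : FF1 α β t 0 = β := by simp [FF1, Ee_zero]

lemma norm_lin (α β : ℂ) (x : ℝ) : ‖α + β * (x : ℂ)‖ ≤ ‖α‖ + ‖β‖ * |x| := by
  refine (norm_add_le _ _).trans ?_
  rw [norm_mul]
  simp [Real.norm_eq_abs]

/-- L² membership from a cubic-Gaussian pointwise bound. -/
lemma memL2_pow (k : ℕ) {t : ℝ} (ht : 0 < t) :
    MemLp (fun x : ℝ => |x| ^ k * Real.exp (-(t * x ^ 2))) 2 (volume : Measure ℝ) := by
  have hcont : Continuous fun x : ℝ => |x| ^ k * Real.exp (-(t * x ^ 2)) := by fun_prop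
  rw [memLp_two_iff_integrable_sq hcont.aestronglyMeasurable]
  have heq : (fun x : ℝ => (|x| ^ k * Real.exp (-(t * x ^ 2))) ^ 2)
      = fun x : ℝ => x ^ (2 * k) * Real.exp (-(2 * t) * x ^ 2) := by
    funext x
    have h1 : (|x| ^ k) ^ 2 = x ^ (2 * k) := by
      rw [← pow_mul, mul_comm k 2, pow_mul, _root_.sq_abs, ← pow_mul]
    have h2 : (Real.exp (-(t * x ^ 2))) ^ 2 = Real.exp (-(2 * t) * x ^ 2) := by
      rw [sq, ← Real.exp_add]; congr 1; ring
    rw [mul_pow, h1, h2]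
  rw [heq]
  have h := integrable_rpow_mul_exp_neg_mul_sq (show (0:ℝ) < 2 * t by linarith)
      (s := ((2 * k : ℕ) : ℝ))
      (lt_of_lt_of_le (by norm_num) (Nat.cast_nonneg _))
  have heq2 : (fun x : ℝ => x ^ (2 * k) * Real.exp (-(2 * t) * x ^ 2))
      = fun x : ℝ => x ^ (((2 * k : ℕ)) : ℝ) * Real.exp (-(2 * t) * x ^ 2) := by
    funext x; rw [Real.rpow_natCast]
  rw [heq2]; exact h

lemma memL2_cubic {E : Type*} [NormedAddCommGroup E] {g : ℝ → E}
    (hm : AEStronglyMeasurable g (volume : Measure ℝ))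
    (c₀ c₁ c₂ c₃ : ℝ) {t : ℝ} (ht : 0 < t)
    (hb : ∀ x : ℝ, ‖g x‖ ≤ (c₀ + c₁ * |x| + c₂ * |x| ^ 2 + c₃ * |x| ^ 3) * Real.exp (-(t * x ^ 2))) :
    MemLp g 2 (volume : Measure ℝ) := by
  have hh : MemLp
      (fun x : ℝ => (c₀ + c₁ * |x| + c₂ * |x| ^ 2 + c₃ * |x| ^ 3) * Real.exp (-(t * x ^ 2))) 2
      (volume : Measure ℝ) := by
    have h0 := (memL2_pow 0 ht).const_mul c₀
    have h1 := (memL2_pow 1 ht).const_mul c₁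
    have h2 := (memL2_pow 2 ht).const_mul c₂
    have h3 := (memL2_pow 3 ht).const_mul c₃
    have : (fun x : ℝ => (c₀ + c₁ * |x| + c₂ * |x| ^ 2 + c₃ * |x| ^ 3) * Real.exp (-(t * x ^ 2)))
        = (fun x : ℝ => c₀ * (|x| ^ 0 * Real.exp (-(t * x ^ 2))))
          + (fun x : ℝ => c₁ * (|x| ^ 1 * Real.exp (-(t * x ^ 2))))
          + (fun x : ℝ => c₂ * (|x| ^ 2 * Real.exp (-(t * x ^ 2))))
          + (fun x : ℝ => c₃ * (|x| ^ 3 * Real.exp (-(t * x ^ 2)))) := by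
      funext x; simp only [Pi.add_apply, pow_zero, pow_one]; ring
    rw [this]
    exact ((h0.add h1).add h2).add h3
  refine hh.of_le hm (ae_of_all _ fun x => ?_)
  exact (hb x).trans (le_abs_self _)

lemma memL2_FF (α β : ℂ) {t : ℝ} (ht : 0 < t) : MemLp (FF α β t) 2 (volume : Measure ℝ) := by
  refine memL2_cubic (continuous_FF α β t).aestronglyMeasurable ‖α‖ ‖β‖ 0 0 ht fun x => ?_
  have h1 : ‖FF α β t x‖ = ‖α + β * x‖ * Real.exp (-(t * x ^ 2)) := by
    rw [FF, norm_mul, norm_Ee]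
  rw [h1]
  have h2 := norm_lin α β x
  nlinarith [Real.exp_pos (-(t * x ^ 2)), abs_nonneg x, norm_nonneg (α + β * (x:ℂ))]

lemma norm_coef (t x : ℝ) (ht : 0 < t) :
    ‖((-(2 * t * x) : ℝ) : ℂ)‖ = 2 * t * |x| := by
  simp [Real.norm_eq_abs, abs_mul, abs_of_pos ht]

lemma memL2_FF1 (α β : ℂ) {t : ℝ} (ht : 0 < t) : MemLp (FF1 α β t) 2 (volume : Measure ℝ) := by
  refine memL2_cubic (continuous_FF1 α β t).aestronglyMeasurable
    ‖β‖ (2 * t * ‖α‖) (2 * t * ‖β‖) 0 ht fun x => ?_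
  have e1 : ‖β * Ee t x‖ = ‖β‖ * Real.exp (-(t * x ^ 2)) := by rw [norm_mul, norm_Ee]
  have e2 : ‖(α + β * x) * (((-(2 * t * x) : ℝ) : ℂ) * Ee t x)‖
      = ‖α + β * (x:ℂ)‖ * (2 * t * |x| * Real.exp (-(t * x ^ 2))) := by
    rw [norm_mul, norm_mul, norm_Ee, norm_coef t x ht]
  calc ‖FF1 α β t x‖ ≤ ‖β * Ee t x‖ + ‖(α + β * x) * (((-(2 * t * x) : ℝ) : ℂ) * Ee t x)‖ :=
        norm_add_le _ _
    _ = ‖β‖ * Real.exp (-(t * x ^ 2))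
        + ‖α + β * (x:ℂ)‖ * (2 * t * |x| * Real.exp (-(t * x ^ 2))) := by rw [e1, e2]
    _ ≤ ‖β‖ * Real.exp (-(t * x ^ 2))
        + (‖α‖ + ‖β‖ * |x|) * (2 * t * |x| * Real.exp (-(t * x ^ 2))) := by
        gcongr
        exact norm_lin α β x
    _ = (‖β‖ + 2 * t * ‖α‖ * |x| + 2 * t * ‖β‖ * |x| ^ 2 + 0 * |x| ^ 3)
        * Real.exp (-(t * x ^ 2)) := by ring

lemma memL2_FF2 (α β : ℂ) {t : ℝ} (ht : 0 < t) : MemLp (FF2 α β t) 2 (volume : Measure ℝ) := by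
  have hcont : Continuous (FF2 α β t) := by
    unfold FF2; have := continuous_Ee t; fun_prop
  refine memL2_cubic hcont.aestronglyMeasurable
    (2 * t * ‖α‖) (6 * t * ‖β‖) (4 * t ^ 2 * ‖α‖) (4 * t ^ 2 * ‖β‖) ht fun x => ?_
  set E := Real.exp (-(t * x ^ 2)) with hE
  have hE0 : 0 < E := Real.exp_pos _
  have e1 : ‖β * (((-(2 * t * x) : ℝ) : ℂ) * Ee t x)‖ = ‖β‖ * (2 * t * |x| * E) := by
    rw [norm_mul, norm_mul, norm_Ee, norm_coef t x ht]
  have e3 : ‖((-(2 * t) : ℝ) : ℂ) * Ee t x‖ = 2 * t * E := by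
    rw [norm_mul, norm_Ee, ← hE]
    simp [Real.norm_eq_abs, abs_of_pos ht]
  have e4 : ‖((-(2 * t * x) : ℝ) : ℂ) * (((-(2 * t * x) : ℝ) : ℂ) * Ee t x)‖
      = 2 * t * |x| * (2 * t * |x| * E) := by
    rw [norm_mul, norm_mul, norm_Ee, norm_coef t x ht]
  have hlin := norm_lin α β x
  have hxx : (0:ℝ) ≤ |x| := abs_nonneg x
  calc ‖FF2 α β t x‖
      ≤ ‖β * (((-(2 * t * x) : ℝ) : ℂ) * Ee t x)‖ +
        (‖β * (((-(2 * t * x) : ℝ) : ℂ) * Ee t x)‖ +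
          ‖α + β * (x:ℂ)‖ * (‖((-(2 * t) : ℝ) : ℂ) * Ee t x‖ +
            ‖((-(2 * t * x) : ℝ) : ℂ) * (((-(2 * t * x) : ℝ) : ℂ) * Ee t x)‖)) := by
        refine (norm_add_le _ _).trans ?_
        gcongr
        refine (norm_add_le _ _).trans ?_
        gcongr
        rw [norm_mul]
        gcongr
        exact norm_add_le _ _
    _ = ‖β‖ * (2 * t * |x| * E) + (‖β‖ * (2 * t * |x| * E) +
          ‖α + β * (x:ℂ)‖ * (2 * t * E + 2 * t * |x| * (2 * t * |x| * E))) := by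
        rw [e1, e3, e4]
    _ ≤ ‖β‖ * (2 * t * |x| * E) + (‖β‖ * (2 * t * |x| * E) +
          (‖α‖ + ‖β‖ * |x|) * (2 * t * E + 2 * t * |x| * (2 * t * |x| * E))) := by
        gcongr
    _ = (2 * t * ‖α‖ + 6 * t * ‖β‖ * |x| + 4 * t ^ 2 * ‖α‖ * |x| ^ 2
          + 4 * t ^ 2 * ‖β‖ * |x| ^ 3) * E := by ring

/-- Piecewise combination of two L² functions. -/
lemma memL2_ite {F G : ℝ → ℂ} (hF : MemLp F 2 (volume : Measure ℝ))
    (hG : MemLp G 2 (volume : Measure ℝ)) :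
    MemLp (fun x : ℝ => if 0 < x then F x else G x) 2 (volume : Measure ℝ) := by
  have heq : (fun x : ℝ => if 0 < x then F x else G x)
      = Set.indicator (Ioi 0) F + Set.indicator (Iic 0) G := by
    funext x
    by_cases h : 0 < x
    · simp [Set.indicator, h, not_le.mpr h]
    · simp [Set.indicator, h, not_lt.mp h]
  rw [heq]
  exact (hF.indicator measurableSet_Ioi).add (hG.indicator measurableSet_Iic)

/-- The two-sided Gaussian spline with prescribed one-sided values/derivatives. -/
noncomputable def mkW (a b c d : ℂ) (t : ℝ) (ht : 1 ≤ t) : W22 where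
  f := fun x => if 0 < x then FF a b t x else FF c d t x
  d1 := fun x => if 0 < x then FF1 a b t x else FF1 c d t x
  d2 := fun x => if 0 < x then FF2 a b t x else FF2 c d t x
  hd1 := by
    intro x hx
    rcases hx.lt_or_gt with h | h
    · have hmem : Iio (0:ℝ) ∈ nhds x := isOpen_Iio.mem_nhds h
      have hev : (fun y => if 0 < y then FF a b t y else FF c d t y) =ᶠ[nhds x] FF c d t := by
        filter_upwards [hmem] with y hy
        rw [if_neg (not_lt.mpr (le_of_lt (mem_Iio.mp hy)))]
      have hd := (hasDerivAt_FF c d t x).congr_of_eventuallyEq hev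
      simpa [not_lt.mpr (le_of_lt h)] using hd
    · have hmem : Ioi (0:ℝ) ∈ nhds x := isOpen_Ioi.mem_nhds h
      have hev : (fun y => if 0 < y then FF a b t y else FF c d t y) =ᶠ[nhds x] FF a b t := by
        filter_upwards [hmem] with y hy
        rw [if_pos (mem_Ioi.mp hy)]
      have hd := (hasDerivAt_FF a b t x).congr_of_eventuallyEq hev
      simpa [h] using hd
  hd2 := by
    intro x hx
    rcases hx.lt_or_gt with h | h
    · have hmem : Iio (0:ℝ) ∈ nhds x := isOpen_Iio.mem_nhds h
      have hev : (fun y => if 0 < y then FF1 a b t y else FF1 c d t y) =ᶠ[nhds x] FF1 c d t := by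
        filter_upwards [hmem] with y hy
        rw [if_neg (not_lt.mpr (le_of_lt (mem_Iio.mp hy)))]
      have hd := (hasDerivAt_FF1 c d t x).congr_of_eventuallyEq hev
      simpa [not_lt.mpr (le_of_lt h)] using hd
    · have hmem : Ioi (0:ℝ) ∈ nhds x := isOpen_Ioi.mem_nhds h
      have hev : (fun y => if 0 < y then FF1 a b t y else FF1 c d t y) =ᶠ[nhds x] FF1 a b t := by
        filter_upwards [hmem] with y hy
        rw [if_pos (mem_Ioi.mp hy)]
      have hd := (hasDerivAt_FF1 a b t x).congr_of_eventuallyEq hev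
      simpa [h] using hd
  l2f := memL2_ite (memL2_FF a b (by linarith)) (memL2_FF c d (by linarith))
  l2d1 := memL2_ite (memL2_FF1 a b (by linarith)) (memL2_FF1 c d (by linarith))
  l2d2 := memL2_ite (memL2_FF2 a b (by linarith)) (memL2_FF2 c d (by linarith))
  fp := a
  fm := c
  dp := b
  dm := d
  hfp := by
    have h1 : Tendsto (FF a b t) (nhdsWithin 0 (Set.Ioi 0)) (nhds a) := by
      have h2 : Tendsto (FF a b t) (nhdsWithin 0 (Set.Ioi 0)) (nhds (FF a b t 0)) :=
        ((continuous_FF a b t).tendsto 0).mono_left nhdsWithin_le_nhds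
      rwa [FF_zero] at h2
    refine h1.congr' ?_
    filter_upwards [self_mem_nhdsWithin] with y hy
    simp [mem_Ioi.mp hy]
  hfm := by
    have h1 : Tendsto (FF c d t) (nhdsWithin 0 (Set.Iio 0)) (nhds c) := by
      have h2 : Tendsto (FF c d t) (nhdsWithin 0 (Set.Iio 0)) (nhds (FF c d t 0)) :=
        ((continuous_FF c d t).tendsto 0).mono_left nhdsWithin_le_nhds
      rwa [FF_zero] at h2
    refine h1.congr' ?_
    filter_upwards [self_mem_nhdsWithin] with y hy
    simp [not_lt.mpr (le_of_lt (mem_Iio.mp hy))]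
  hdp := by
    have h1 : Tendsto (FF1 a b t) (nhdsWithin 0 (Set.Ioi 0)) (nhds b) := by
      have h2 : Tendsto (FF1 a b t) (nhdsWithin 0 (Set.Ioi 0)) (nhds (FF1 a b t 0)) :=
        ((continuous_FF1 a b t).tendsto 0).mono_left nhdsWithin_le_nhds
      rwa [FF1_zero] at h2
    refine h1.congr' ?_
    filter_upwards [self_mem_nhdsWithin] with y hy
    simp [mem_Ioi.mp hy]
  hdm := by
    have h1 : Tendsto (FF1 c d t) (nhdsWithin 0 (Set.Iio 0)) (nhds d) := by
      have h2 : Tendsto (FF1 c d t) (nhdsWithin 0 (Set.Iio 0)) (nhds (FF1 c d t 0)) :=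
        ((continuous_FF1 c d t).tendsto 0).mono_left nhdsWithin_le_nhds
      rwa [FF1_zero] at h2
    refine h1.congr' ?_
    filter_upwards [self_mem_nhdsWithin] with y hy
    simp [not_lt.mpr (le_of_lt (mem_Iio.mp hy))]

/-- Basic integrals against the pieces of the spline. -/
noncomputable def Jint (q : ℝ → ℂ) (k : ℕ) (s : Set ℝ) (t : ℝ) : ℂ :=
  ∫ x : ℝ, (starRingEnd ℂ) (q x) * Set.indicator s (fun y : ℝ => ((y : ℂ)) ^ k * Ee t y) x

lemma memL2_basis (k : ℕ) (hk : k ≤ 1) {t : ℝ} (ht : 0 < t) {s : Set ℝ}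
    (hs : MeasurableSet s) :
    MemLp (Set.indicator s (fun y : ℝ => ((y : ℂ)) ^ k * Ee t y)) 2 (volume : Measure ℝ) := by
  refine MemLp.indicator hs ?_
  have hcont : Continuous (fun y : ℝ => ((y : ℂ)) ^ k * Ee t y) := by
    have := continuous_Ee t; fun_prop
  refine memL2_cubic hcont.aestronglyMeasurable 1 1 0 0 ht fun x => ?_
  have h1 : ‖((x : ℂ)) ^ k * Ee t x‖ = |x| ^ k * Real.exp (-(t * x ^ 2)) := by
    rw [norm_mul, norm_pow, norm_Ee, Complex.norm_real, Real.norm_eq_abs]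
  rw [h1]
  have hE := Real.exp_pos (-(t * x ^ 2))
  have hx := abs_nonneg x
  have hxk : |x| ^ k ≤ 1 + |x| := by
    interval_cases k
    · simpa using (by linarith : (1:ℝ) ≤ 1 + |x|)
    · simpa using (by linarith : |x| ≤ 1 + |x|)
  nlinarith

lemma integrable_conj_mul {q e : ℝ → ℂ} (hq : MemLp q 2 (volume : Measure ℝ))
    (he : MemLp e 2 (volume : Measure ℝ)) :
    Integrable (fun x => (starRingEnd ℂ) (q x) * e x) (volume : Measure ℝ) := by
  have hqc : MemLp (fun x => (starRingEnd ℂ) (q x)) 2 (volume : Measure ℝ) := by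
    refine hq.of_le ?_ (ae_of_all _ fun x => by simp)
    exact Complex.continuous_conj.comp_aestronglyMeasurable hq.aestronglyMeasurable
  have h := he.smul hqc (p := 2) (q := 2) (r := 1)
  have heq : ((fun x => (starRingEnd ℂ) (q x)) • e) = fun x => (starRingEnd ℂ) (q x) * e x := by
    funext x; simp [Pi.smul_apply', smul_eq_mul]
  rw [heq] at h
  exact memLp_one_iff_integrable.mp h

lemma ip_expand (q : ℝ → ℂ) (hq : MemLp q 2 (volume : Measure ℝ)) (a b c d : ℂ) {t : ℝ}
    (ht : 0 < t) :
    ip q (fun x => if 0 < x then FF a b t x else FF c d t x)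
      = a * Jint q 0 (Ioi 0) t + b * Jint q 1 (Ioi 0) t
        + c * Jint q 0 (Iic 0) t + d * Jint q 1 (Iic 0) t := by
  have hint : ∀ (k : ℕ), k ≤ 1 → ∀ (s : Set ℝ), MeasurableSet s →
      Integrable (fun x => (starRingEnd ℂ) (q x) *
        Set.indicator s (fun y : ℝ => ((y : ℂ)) ^ k * Ee t y) x) (volume : Measure ℝ) :=
    fun k hk s hs => integrable_conj_mul hq (memL2_basis k hk ht hs)
  have I0 := (hint 0 (by norm_num) (Ioi 0) measurableSet_Ioi).const_mul a
  have I1 := (hint 1 le_rfl (Ioi 0) measurableSet_Ioi).const_mul b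
  have I2 := (hint 0 (by norm_num) (Iic 0) measurableSet_Iic).const_mul c
  have I3 := (hint 1 le_rfl (Iic 0) measurableSet_Iic).const_mul d
  have hfe : (fun x : ℝ => (starRingEnd ℂ) (q x) * (if 0 < x then FF a b t x else FF c d t x))
      = fun x : ℝ =>
        a * ((starRingEnd ℂ) (q x) * Set.indicator (Ioi 0) (fun y : ℝ => ((y:ℂ)) ^ 0 * Ee t y) x)
        + b * ((starRingEnd ℂ) (q x) * Set.indicator (Ioi 0) (fun y : ℝ => ((y:ℂ)) ^ 1 * Ee t y) x)
        + c * ((starRingEnd ℂ) (q x) * Set.indicator (Iic 0) (fun y : ℝ => ((y:ℂ)) ^ 0 * Ee t y) x)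
        + d * ((starRingEnd ℂ) (q x) * Set.indicator (Iic 0) (fun y : ℝ => ((y:ℂ)) ^ 1 * Ee t y) x) := by
    funext x
    by_cases h : 0 < x
    · rw [if_pos h, Set.indicator_of_mem (mem_Ioi.mpr h), Set.indicator_of_mem (mem_Ioi.mpr h),
        Set.indicator_of_notMem (by simpa using h), Set.indicator_of_notMem (by simpa using h)]
      simp only [pow_zero, pow_one, FF]
      ring
    · rw [if_neg h, Set.indicator_of_notMem (by simpa using h),
        Set.indicator_of_notMem (by simpa using h),
        Set.indicator_of_mem (mem_Iic.mpr (not_lt.mp h)),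
        Set.indicator_of_mem (mem_Iic.mpr (not_lt.mp h))]
      simp only [pow_zero, pow_one, FF]
      ring
  have I01 : Integrable (fun x : ℝ =>
      a * ((starRingEnd ℂ) (q x) * Set.indicator (Ioi 0) (fun y : ℝ => ((y:ℂ)) ^ 0 * Ee t y) x)
      + b * ((starRingEnd ℂ) (q x) * Set.indicator (Ioi 0) (fun y : ℝ => ((y:ℂ)) ^ 1 * Ee t y) x))
      (volume : Measure ℝ) := I0.add I1
  have I012 : Integrable (fun x : ℝ =>
      a * ((starRingEnd ℂ) (q x) * Set.indicator (Ioi 0) (fun y : ℝ => ((y:ℂ)) ^ 0 * Ee t y) x)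
      + b * ((starRingEnd ℂ) (q x) * Set.indicator (Ioi 0) (fun y : ℝ => ((y:ℂ)) ^ 1 * Ee t y) x)
      + c * ((starRingEnd ℂ) (q x) * Set.indicator (Iic 0) (fun y : ℝ => ((y:ℂ)) ^ 0 * Ee t y) x))
      (volume : Measure ℝ) := I01.add I2
  rw [ip, hfe, integral_add I012 I3, integral_add I01 I2,
    integral_add I0 I1, integral_const_mul, integral_const_mul, integral_const_mul,
    integral_const_mul]
  rfl

lemma integrable_mul_L2 {f g : ℝ → ℝ} (hf : MemLp f 2 (volume : Measure ℝ))
    (hg : MemLp g 2 (volume : Measure ℝ)) :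
    Integrable (fun x => f x * g x) (volume : Measure ℝ) := by
  have h := hg.smul hf (p := 2) (q := 2) (r := 1)
  have heq : (f • g) = fun x => f x * g x := by
    funext x; simp [Pi.smul_apply', smul_eq_mul]
  rw [heq] at h
  exact memLp_one_iff_integrable.mp h

set_option maxHeartbeats 1000000 in
lemma Jint_tendsto (q : ℝ → ℂ) (hq : MemLp q 2 (volume : Measure ℝ)) (k : ℕ) (hk : k ≤ 1)
    (s : Set ℝ) (hs : MeasurableSet s) :
    Tendsto (fun n : ℕ => Jint q k s ((n : ℝ) + 1)) atTop (nhds 0) := by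
  have hmemB : MemLp (fun x : ℝ => (1 + |x|) * Real.exp (-(1 * x ^ 2))) 2
      (volume : Measure ℝ) := by
    have hcont : Continuous fun x : ℝ => (1 + |x|) * Real.exp (-(1 * x ^ 2)) := by fun_prop
    refine memL2_cubic hcont.aestronglyMeasurable 1 1 0 0 one_pos fun x => ?_
    show ‖(1 + |x|) * Real.exp (-(1 * x ^ 2))‖ ≤ _
    rw [Real.norm_eq_abs, _root_.abs_of_nonneg (by positivity)]
    have hE := Real.exp_pos (-(1 * x ^ 2))
    nlinarith [abs_nonneg x]
  have hbound_int : Integrable (fun x : ℝ => ‖q x‖ * ((1 + |x|) * Real.exp (-(1 * x ^ 2))))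
      (volume : Measure ℝ) := integrable_mul_L2 hq.norm hmemB
  have hmeas : ∀ n : ℕ, AEStronglyMeasurable
      (fun x : ℝ => (starRingEnd ℂ) (q x) *
        Set.indicator s (fun y : ℝ => ((y:ℂ)) ^ k * Ee ((n:ℝ)+1) y) x) (volume : Measure ℝ) := by
    intro n
    refine (Complex.continuous_conj.comp_aestronglyMeasurable hq.aestronglyMeasurable).mul ?_
    have hcont : Continuous (fun y : ℝ => ((y:ℂ)) ^ k * Ee ((n:ℝ)+1) y) := by
      have := continuous_Ee ((n:ℝ)+1); fun_prop
    exact ((hcont.stronglyMeasurable.indicator hs)).aestronglyMeasurable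
  have hstep : ∀ (n : ℕ) (x : ℝ),
      ‖(starRingEnd ℂ) (q x) * Set.indicator s (fun y : ℝ => ((y:ℂ)) ^ k * Ee ((n:ℝ)+1) y) x‖
        ≤ ‖q x‖ * (1 + |x|) * Real.exp (-(((n:ℝ)+1) * x ^ 2)) := by
    intro n x
    rw [norm_mul]
    have h1 : ‖(starRingEnd ℂ) (q x)‖ = ‖q x‖ := by simp
    rw [h1, mul_assoc]
    refine mul_le_mul_of_nonneg_left ?_ (norm_nonneg _)
    refine (norm_indicator_le_norm_self _ _).trans ?_
    have h2 : ‖((x:ℂ)) ^ k * Ee ((n:ℝ)+1) x‖ = |x| ^ k * Real.exp (-(((n:ℝ)+1) * x ^ 2)) := by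
      rw [norm_mul, norm_pow, norm_Ee, Complex.norm_real, Real.norm_eq_abs]
    rw [h2]
    have hxk : |x| ^ k ≤ 1 + |x| := by
      have := abs_nonneg x
      interval_cases k
      · simpa using (by linarith : (1:ℝ) ≤ 1 + |x|)
      · simpa using (by linarith : |x| ≤ 1 + |x|)
    exact mul_le_mul_of_nonneg_right hxk (Real.exp_pos _).le
  have h_bound : ∀ n : ℕ, ∀ᵐ x : ℝ,
      ‖(starRingEnd ℂ) (q x) * Set.indicator s (fun y : ℝ => ((y:ℂ)) ^ k * Ee ((n:ℝ)+1) y) x‖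
        ≤ ‖q x‖ * ((1 + |x|) * Real.exp (-(1 * x ^ 2))) := by
    intro n
    refine ae_of_all _ fun x => (hstep n x).trans ?_
    rw [← mul_assoc]
    have hexp : Real.exp (-(((n:ℝ)+1) * x ^ 2)) ≤ Real.exp (-(1 * x ^ 2)) := by
      apply Real.exp_le_exp.mpr
      nlinarith [sq_nonneg x, Nat.cast_nonneg (α := ℝ) n]
    exact mul_le_mul_of_nonneg_left hexp (by positivity)
  have h_lim : ∀ᵐ x : ℝ, Tendsto
      (fun n : ℕ => (starRingEnd ℂ) (q x) *
        Set.indicator s (fun y : ℝ => ((y:ℂ)) ^ k * Ee ((n:ℝ)+1) y) x) atTop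
      (nhds ((fun _ : ℝ => (0:ℂ)) x)) := by
    have h0 : ∀ᵐ x : ℝ, x ≠ 0 := by
      have hset : {x : ℝ | ¬ x ≠ 0} = {0} := by ext y; simp
      rw [ae_iff, hset]
      exact measure_singleton 0
    filter_upwards [h0] with x hx
    have hx2 : 0 < x ^ 2 := by positivity
    apply squeeze_zero_norm (fun n => hstep n x)
    have hatTop : Tendsto (fun n : ℕ => ((n:ℝ)+1) * x ^ 2) atTop atTop :=
      (tendsto_atTop_add_const_right atTop 1 tendsto_natCast_atTop_atTop).atTop_mul_const hx2
    have hexp : Tendsto (fun n : ℕ => Real.exp (-(((n:ℝ)+1) * x ^ 2))) atTop (nhds 0) := by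
      exact Real.tendsto_exp_atBot.comp (tendsto_neg_atTop_atBot.comp hatTop)
    have h3 := hexp.const_mul (‖q x‖ * (1 + |x|))
    rw [mul_zero] at h3
    exact h3
  have h := tendsto_integral_of_dominated_convergence
      (fun x : ℝ => ‖q x‖ * ((1 + |x|) * Real.exp (-(1 * x ^ 2)))) hmeas hbound_int h_bound h_lim
  simpa [Jint] using h

set_option maxHeartbeats 1000000 in
/-- surjectivity of the boundary map `(Γ₀, Γ₁) : W²₂(ℝ\{0}) → ℂ² ⊕ ℂ²`:
for any `h₀, h₁ ∈ ℂ²` there is `f ∈ W²₂(ℝ\{0})` with `Γ₀ f = h₀` and `Γ₁ f = h₁`. -/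
theorem stmt5 (q₁ q₂ : ℝ → ℂ)
    (hq₁ : MemLp q₁ 2 (volume : Measure ℝ)) (hq₂ : MemLp q₂ 2 (volume : Measure ℝ))
    (hq₁pc : ∃ s : Finset ℝ, ∀ x ∉ s, ContinuousAt q₁ x)
    (hq₂pc : ∃ s : Finset ℝ, ∀ x ∉ s, ContinuousAt q₂ x)
    (h₀ h₁ : ℂ × ℂ) :
    ∃ u : W22, Γ0 u = h₀ ∧ Γ1 q₁ q₂ u = h₁ := by
  classical
  have hlt : ∀ (q : ℝ → ℂ), MemLp q 2 (volume : Measure ℝ) → ∀ k : ℕ, k ≤ 1 →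
      ∀ s : Set ℝ, MeasurableSet s →
      ∀ᶠ n : ℕ in atTop, ‖Jint q k s ((n:ℝ)+1)‖ < 1/4 := by
    intro q hq k hk s hs
    have h := (Jint_tendsto q hq k hk s hs).norm
    rw [norm_zero] at h
    exact h.eventually_lt_const (by norm_num)
  have E1 := hlt q₁ hq₁ 0 (by norm_num) (Ioi 0) measurableSet_Ioi
  have E2 := hlt q₁ hq₁ 1 le_rfl (Ioi 0) measurableSet_Ioi
  have E3 := hlt q₁ hq₁ 0 (by norm_num) (Iic 0) measurableSet_Iic
  have E4 := hlt q₁ hq₁ 1 le_rfl (Iic 0) measurableSet_Iic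
  have E5 := hlt q₂ hq₂ 0 (by norm_num) (Ioi 0) measurableSet_Ioi
  have E6 := hlt q₂ hq₂ 1 le_rfl (Ioi 0) measurableSet_Ioi
  have E7 := hlt q₂ hq₂ 0 (by norm_num) (Iic 0) measurableSet_Iic
  have E8 := hlt q₂ hq₂ 1 le_rfl (Iic 0) measurableSet_Iic
  obtain ⟨n, hn1, hn2, hn3, hn4, hn5, hn6, hn7, hn8⟩ :=
    (E1.and (E2.and (E3.and (E4.and (E5.and (E6.and (E7.and E8))))))).exists
  set t : ℝ := (n:ℝ) + 1 with htdef
  have ht1 : 1 ≤ t := by rw [htdef]; linarith [Nat.cast_nonneg (α := ℝ) n]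
  have ht0 : (0:ℝ) < t := by linarith
  set P0 := Jint q₁ 0 (Ioi 0) t with hP0
  set P1 := Jint q₁ 1 (Ioi 0) t with hP1
  set P2 := Jint q₁ 0 (Iic 0) t with hP2
  set P3 := Jint q₁ 1 (Iic 0) t with hP3
  set Q0 := Jint q₂ 0 (Ioi 0) t with hQ0
  set Q1 := Jint q₂ 1 (Ioi 0) t with hQ1
  set Q2 := Jint q₂ 0 (Iic 0) t with hQ2
  set Q3 := Jint q₂ 1 (Iic 0) t with hQ3
  have h2c : ‖(2:ℂ)‖ = 2 := by norm_num
  set r₁ := h₀.1 with hr₁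
  set r₂ := -h₀.2 with hr₂
  set A := (Q0 - Q2)/2 with hA
  set B := (Q1 - Q3)/2 with hB
  set C := (P0 - P2)/2 with hC
  set D := (P1 - P3)/2 with hD
  have hAn : ‖A‖ ≤ 1/4 := by
    rw [hA, norm_div, h2c]
    have := norm_sub_le Q0 Q2
    linarith
  have hBn : ‖B‖ ≤ 1/4 := by
    rw [hB, norm_div, h2c]
    have := norm_sub_le Q1 Q3
    linarith
  have hCn : ‖C‖ ≤ 1/4 := by
    rw [hC, norm_div, h2c]
    have := norm_sub_le P0 P2
    linarith
  have hDn : ‖D‖ ≤ 1/4 := by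
    rw [hD, norm_div, h2c]
    have := norm_sub_le P1 P3
    linarith
  set K₁ := r₁*(P0+P2) + r₂*(P1+P3) with hK₁
  set K₂ := r₁*(Q0+Q2) + r₂*(Q1+Q3) with hK₂
  set w₁ := h₁.2 + K₂ with hw₁
  set w₂ := h₁.1 + K₁ with hw₂
  set Δ := (1-A)*(1-D) - B*C with hΔdef
  have h1A : (3:ℝ)/4 ≤ ‖1-A‖ := by
    have := norm_sub_norm_le (1:ℂ) A
    rw [norm_one] at this
    linarith
  have h1D : (3:ℝ)/4 ≤ ‖1-D‖ := by
    have := norm_sub_norm_le (1:ℂ) D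
    rw [norm_one] at this
    linarith
  have hlow : (1:ℝ)/2 ≤ ‖Δ‖ := by
    rw [hΔdef]
    have h := norm_sub_norm_le ((1-A)*(1-D)) (B*C)
    rw [norm_mul, norm_mul] at h
    nlinarith [norm_nonneg B, norm_nonneg C, norm_nonneg (1-A), norm_nonneg (1-D)]
  have hΔ : Δ ≠ 0 := by
    intro h
    rw [h, norm_zero] at hlow
    linarith
  set s₁ := ((1-D)*w₁ + B*w₂)/Δ with hs₁
  set s₂ := ((1-A)*w₂ + C*w₁)/Δ with hs₂
  have eq1 : (1-A)*s₁ - B*s₂ = w₁ := by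
    rw [hs₁, hs₂]
    field_simp
    rw [hΔdef]
    ring
  have eq2 : -(C*s₁) + (1-D)*s₂ = w₂ := by
    rw [hs₁, hs₂]
    field_simp
    rw [hΔdef]
    ring
  set ca := r₁ + s₁/2 with hca
  set cb := r₂ + s₂/2 with hcb
  set cc := r₁ - s₁/2 with hcc
  set cd := r₂ - s₂/2 with hcd
  set u := mkW ca cb cc cd t ht1 with hu
  have hf : u.f = (fun x => if 0 < x then FF ca cb t x else FF cc cd t x) := rfl
  have hip1 : ip q₁ u.f = ca * P0 + cb * P1 + cc * P2 + cd * P3 := by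
    rw [hf, ip_expand q₁ hq₁ ca cb cc cd ht0, ← hP0, ← hP1, ← hP2, ← hP3]
  have hip2 : ip q₂ u.f = ca * Q0 + cb * Q1 + cc * Q2 + cd * Q3 := by
    rw [hf, ip_expand q₂ hq₂ ca cb cc cd ht0, ← hQ0, ← hQ1, ← hQ2, ← hQ3]
  refine ⟨u, ?_, ?_⟩
  · show (u.fr, -u.dr) = h₀
    have hcomp1 : u.fr = h₀.1 := by
      show (ca + cc)/2 = h₀.1
      rw [hca, hcc, hr₁]
      ring
    have hcomp2 : -u.dr = h₀.2 := by
      show -((cb + cd)/2) = h₀.2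
      rw [hcb, hcd, hr₂]
      ring
    rw [hcomp1, hcomp2]
  · show (u.ds - ip q₁ u.f, u.fs - ip q₂ u.f) = h₁
    have hds : u.ds = cb - cd := rfl
    have hfs : u.fs = ca - cc := rfl
    have hcomp1 : u.ds - ip q₁ u.f = h₁.1 := by
      rw [hds, hip1, hca, hcb, hcc, hcd]
      rw [hw₂, hK₁, hC, hD] at eq2
      linear_combination eq2
    have hcomp2 : u.fs - ip q₂ u.f = h₁.2 := by
      rw [hfs, hip2, hca, hcb, hcc, hcd]
      rw [hw₁, hK₂, hA, hB] at eq1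
      linear_combination eq1
    rw [hcomp1, hcomp2]
end

section
/- If a, d ∈ ℝ, b, c ∈ iℝ, PTq₁ = q₁ and PTq₂ = −q₂ (where (Pf)(x) = f(−x) and Tf = f*), then the matrix identity Tσ₃ = σ₃T* holds for T = [[a,b],[c,d]] and σ₃ = diag(1,−1), and the operator H_T defined by (4) with these data is PT-symmetric: PT H_T = H_T PT. -/
open MeasureTheory Filter Set Complex

-- helper lemmas
lemma memLp_star_neg {f : ℝ → ℂ} (hf : MemLp f 2 (volume : Measure ℝ)) :
    MemLp (fun x => (starRingEnd ℂ) (f (-x))) 2 (volume : Measure ℝ) := by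
  have h1 : MemLp (fun x => f (-x)) 2 (volume : Measure ℝ) :=
    hf.comp_measurePreserving (Measure.measurePreserving_neg _)
  exact MemLp.of_le h1 (Complex.continuous_conj.comp_aestronglyMeasurable h1.1)
    (Eventually.of_forall fun x => by simp)

lemma hasDerivAt_star_neg {f : ℝ → ℂ} {f' : ℂ} {x : ℝ} (h : HasDerivAt f f' (-x)) :
    HasDerivAt (fun y => (starRingEnd ℂ) (f (-y))) (-(starRingEnd ℂ) f') x := by
  have h1 : HasDerivAt (fun y : ℝ => f (-y)) (-f') x := by
    have := HasDerivAt.scomp x h (hasDerivAt_neg x); simp at this; exact this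
  simpa using h1.star

lemma tendsto_neg_Ioi : Tendsto (fun x : ℝ => -x) (nhdsWithin 0 (Set.Ioi 0)) (nhdsWithin 0 (Set.Iio 0)) := by
  have : Tendsto (fun x : ℝ => -x) (nhdsWithin 0 (Set.Ioi 0)) (nhdsWithin (-0) (Set.Iio 0)) := by
    apply Tendsto.inf (continuous_neg.tendsto 0) (tendsto_principal_principal.2 _)
    intro x hx; simpa using hx
  simpa using this
lemma tendsto_neg_Iio : Tendsto (fun x : ℝ => -x) (nhdsWithin 0 (Set.Iio 0)) (nhdsWithin 0 (Set.Ioi 0)) := by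
  have : Tendsto (fun x : ℝ => -x) (nhdsWithin 0 (Set.Iio 0)) (nhdsWithin (-0) (Set.Ioi 0)) := by
    apply Tendsto.inf (continuous_neg.tendsto 0) (tendsto_principal_principal.2 _)
    intro x hx; simpa using hx
  simpa using this


open Matrix in
/-- if `a, d ∈ ℝ`, `b, c ∈ iℝ`, `PT q₁ = q₁`, `PT q₂ = -q₂`
(`(Pf)(x) = f(-x)`, `Tf = f*`), then `Tσ₃ = σ₃ T*` holds for `T = [[a,b],[c,d]]`,
`σ₃ = diag(1,-1)`, and the operator `H_T` is `PT`-symmetric: `PT` maps the domain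
`{f : TΓ₀f = Γ₁f}` into itself and `H_T (PT f) = PT (H_T f)`. -/
theorem stmt7 (a b c d : ℂ) (ha : a.im = 0) (hd : d.im = 0) (hb : b.re = 0) (hc : c.re = 0)
    (q₁ q₂ : ℝ → ℂ)
    (hq₁ : MemLp q₁ 2 (volume : Measure ℝ)) (hq₂ : MemLp q₂ 2 (volume : Measure ℝ))
    (hq₁pc : ∃ s : Finset ℝ, ∀ x ∉ s, ContinuousAt q₁ x)
    (hq₂pc : ∃ s : Finset ℝ, ∀ x ∉ s, ContinuousAt q₂ x)
    (hPTq₁ : ∀ x : ℝ, (starRingEnd ℂ) (q₁ (-x)) = q₁ x)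
    (hPTq₂ : ∀ x : ℝ, (starRingEnd ℂ) (q₂ (-x)) = -q₂ x) :
    (!![a, b; c, d] * !![(1 : ℂ), 0; 0, -1]
        = !![(1 : ℂ), 0; 0, -1] * (!![a, b; c, d]).map (starRingEnd ℂ)) ∧
    ∀ u : W22,
      (a * (Γ0 u).1 + b * (Γ0 u).2 = (Γ1 q₁ q₂ u).1 ∧
       c * (Γ0 u).1 + d * (Γ0 u).2 = (Γ1 q₁ q₂ u).2) →
      ∃ v : W22, (∀ x : ℝ, v.f x = (starRingEnd ℂ) (u.f (-x))) ∧
        (a * (Γ0 v).1 + b * (Γ0 v).2 = (Γ1 q₁ q₂ v).1 ∧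
         c * (Γ0 v).1 + d * (Γ0 v).2 = (Γ1 q₁ q₂ v).2) ∧
        ∀ x : ℝ, x ≠ 0 → Smax q₁ q₂ v x = (starRingEnd ℂ) (Smax q₁ q₂ u (-x)) := by
  have ha' : (starRingEnd ℂ) a = a := Complex.conj_eq_iff_im.2 ha
  have hd' : (starRingEnd ℂ) d = d := Complex.conj_eq_iff_im.2 hd
  have hb' : (starRingEnd ℂ) b = -b := by apply Complex.ext <;> simp [hb]
  have hc' : (starRingEnd ℂ) c = -c := by apply Complex.ext <;> simp [hc]
  have hq₁' : ∀ x : ℝ, q₁ (-x) = (starRingEnd ℂ) (q₁ x) := fun x => by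
    rw [← hPTq₁ x]; simp
  have hq₂' : ∀ x : ℝ, q₂ (-x) = -(starRingEnd ℂ) (q₂ x) := fun x => by
    have := congrArg (starRingEnd ℂ) (hPTq₂ x); simpa using this
  constructor
  · ext i j
    fin_cases i <;> fin_cases j <;>
      simp [Matrix.mul_apply, Fin.sum_univ_two, ha', hb', hc', hd']
  · intro u hu
    have hip1 : ip q₁ (fun x => (starRingEnd ℂ) (u.f (-x))) = (starRingEnd ℂ) (ip q₁ u.f) := by
      unfold ip
      rw [← integral_conj, ← integral_neg_eq_self
        (fun x => (starRingEnd ℂ) ((starRingEnd ℂ) (q₁ x) * u.f x)) volume]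
      apply integral_congr_ae; filter_upwards with x
      simp [hq₁' x, mul_comm]
    have hip2 : ip q₂ (fun x => (starRingEnd ℂ) (u.f (-x))) = -(starRingEnd ℂ) (ip q₂ u.f) := by
      unfold ip
      rw [← integral_conj, ← integral_neg, ← integral_neg_eq_self
        (fun x => -(starRingEnd ℂ) ((starRingEnd ℂ) (q₂ x) * u.f x)) volume]
      apply integral_congr_ae; filter_upwards with x
      simp [hq₂' x, mul_comm]
    refine ⟨{ f := fun x => (starRingEnd ℂ) (u.f (-x))
              d1 := fun x => -(starRingEnd ℂ) (u.d1 (-x))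
              d2 := fun x => (starRingEnd ℂ) (u.d2 (-x))
              hd1 := fun x hx => hasDerivAt_star_neg (u.hd1 (-x) (neg_ne_zero.2 hx))
              hd2 := fun x hx => by
                have := (hasDerivAt_star_neg (u.hd2 (-x) (neg_ne_zero.2 hx))).neg; simp at this; exact this
              l2f := memLp_star_neg u.l2f
              l2d1 := (memLp_star_neg u.l2d1).neg
              l2d2 := memLp_star_neg u.l2d2
              fp := (starRingEnd ℂ) u.fm
              fm := (starRingEnd ℂ) u.fp
              dp := -(starRingEnd ℂ) u.dm
              dm := -(starRingEnd ℂ) u.dp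
              hfp := (Complex.continuous_conj.tendsto _).comp (u.hfm.comp tendsto_neg_Ioi)
              hfm := (Complex.continuous_conj.tendsto _).comp (u.hfp.comp tendsto_neg_Iio)
              hdp := ((Complex.continuous_conj.tendsto _).comp
                        (u.hdm.comp tendsto_neg_Ioi)).neg
              hdm := ((Complex.continuous_conj.tendsto _).comp
                        (u.hdp.comp tendsto_neg_Iio)).neg }, fun x => rfl, ?_, ?_⟩
    · obtain ⟨h1, h2⟩ := hu
      have h1' := congrArg (starRingEnd ℂ) h1
      have h2' := congrArg (starRingEnd ℂ) h2
      simp only [Γ0, Γ1, W22.fr, W22.dr, W22.fs, W22.ds, _root_.map_add, _root_.map_mul, _root_.map_sub,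
        _root_.map_neg, map_div₀, _root_.map_ofNat, ha', hb', hc', hd'] at h1' h2' ⊢
      rw [hip1, hip2]
      constructor
      · linear_combination h1'
      · linear_combination -h2'
    · intro x hx
      simp only [Smax, W22.fr, W22.dr, _root_.map_add, _root_.map_sub, _root_.map_mul, _root_.map_neg, map_div₀,
        _root_.map_ofNat, hPTq₁, hPTq₂]
      ring
end

section
/- Let H_a be the nonlocal δ-interaction operator (H_a f = −f'' + f_r(0)q, domain {f ∈ W²₂(ℝ\{0}) : f_s(0)=0, f'_s(0) = a f_r(0) + (q,f)}). If H_a has a real eigenvalue, then H_a is a self-adjoint operator in L²(ℝ). -/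
open MeasureTheory Filter Set Complex
open scoped ENNReal

/-- The nonlocal δ-interaction operator action `H_a f = -f'' + f_r(0) q`. -/
noncomputable def Ha (q : ℝ → ℂ) (u : W22) : ℝ → ℂ := fun x => -(u.d2 x) + u.fr * q x

/-- Membership in the domain of `H_a`: `f_s(0) = 0` and `f'_s(0) = a f_r(0) + (q, f)`. -/
def InDomHa (a : ℂ) (q : ℝ → ℂ) (u : W22) : Prop :=
  u.fs = 0 ∧ u.ds = a * u.fr + ip q u.f

lemma mulL2 {f g : ℝ → ℂ} (hf : MemLp f 2 (volume : Measure ℝ))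
    (hg : MemLp g 2 (volume : Measure ℝ)) :
    Integrable (fun x => f x * g x) (volume : Measure ℝ) := by
  have h : MemLp (f • g) 1 (volume : Measure ℝ) :=
    hg.smul hf
  rw [memLp_one_iff_integrable] at h
  exact h

lemma conjL2 {f : ℝ → ℂ} (hf : MemLp f 2 (volume : Measure ℝ)) :
    MemLp (fun x => (starRingEnd ℂ) (f x)) 2 (volume : Measure ℝ) :=
  hf.of_le (Complex.continuous_conj.comp_aestronglyMeasurable hf.1)
    (Eventually.of_forall (fun x => by simp))

lemma L2II {f : ℝ → ℂ} (hf : MemLp f 2 (volume : Measure ℝ)) (a b : ℝ) :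
    IntervalIntegrable f volume a b := by
  rw [intervalIntegrable_iff]
  have h1 : MemLp f 2 (volume.restrict (Set.uIoc a b)) := hf.restrict _
  haveI : IsFiniteMeasure (volume.restrict (Set.uIoc a b)) := by
    constructor
    rw [Measure.restrict_apply_univ]
    exact measure_Ioc_lt_top
  exact h1.integrable one_le_two

lemma limit_zero_atTop {N : ℝ → ℝ} (hi : Integrable N (volume : Measure ℝ))
    {c : ℝ} (h : Tendsto N atTop (nhds c)) : c = 0 := by
  by_contra hc
  have hpos : 0 < |c| := abs_pos.2 hc
  have hev : ∀ᶠ x in atTop, |c| / 2 < ‖N x‖ :=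
    h.norm.eventually (eventually_gt_nhds (half_lt_self hpos))
  obtain ⟨M, hM⟩ := eventually_atTop.1 hev
  have hconst : IntegrableOn (fun _ : ℝ => |c| / 2) (Ici M) volume := by
    refine Integrable.mono (hi.integrableOn) aestronglyMeasurable_const ?_
    refine (ae_restrict_iff' measurableSet_Ici).2 (Eventually.of_forall fun x hx => ?_)
    have := hM x hx
    simp only [Real.norm_eq_abs, _root_.abs_abs, abs_div]
    calc |c|/|2| = |c|/2 := by norm_num
    _ ≤ |N x| := le_of_lt (by simpa using this)
  rw [integrableOn_const_iff] at hconst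
  rcases hconst with h1 | h2
  · exact hc (by simpa using h1)
  · rw [Real.volume_Ici] at h2; exact (lt_irrefl _ h2)

lemma limit_zero_atBot {N : ℝ → ℝ} (hi : Integrable N (volume : Measure ℝ))
    {c : ℝ} (h : Tendsto N atBot (nhds c)) : c = 0 := by
  by_contra hc
  have hpos : 0 < |c| := abs_pos.2 hc
  have hev : ∀ᶠ x in atBot, |c| / 2 < ‖N x‖ :=
    h.norm.eventually (eventually_gt_nhds (half_lt_self hpos))
  obtain ⟨M, hM⟩ := eventually_atBot.1 hev
  have hconst : IntegrableOn (fun _ : ℝ => |c| / 2) (Iic M) volume := by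
    refine Integrable.mono (hi.integrableOn) aestronglyMeasurable_const ?_
    refine (ae_restrict_iff' measurableSet_Iic).2 (Eventually.of_forall fun x hx => ?_)
    have := hM x hx
    simp only [Real.norm_eq_abs, _root_.abs_abs, abs_div]
    calc |c|/|2| = |c|/2 := by norm_num
    _ ≤ |N x| := le_of_lt (by simpa using this)
  rw [integrableOn_const_iff] at hconst
  rcases hconst with h1 | h2
  · exact hc (by simpa using h1)
  · rw [Real.volume_Iic] at h2; exact (lt_irrefl _ h2)

lemma normSqDeriv {f : ℝ → ℂ} {c : ℂ} {x : ℝ} (hf : HasDerivAt f c x) :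
    HasDerivAt (fun y => ‖f y‖ ^ 2) (2 * ((starRingEnd ℂ) (f x) * c).re) x := by
  convert hf.norm_sq using 1
  simp [Complex.inner]
  ring

lemma normSqDerivInt {f f' : ℝ → ℂ} (hf : MemLp f 2 (volume : Measure ℝ))
    (hf' : MemLp f' 2 (volume : Measure ℝ)) :
    Integrable (fun x => 2 * ((starRingEnd ℂ) (f x) * f' x).re) (volume : Measure ℝ) := by
  have h1 : Integrable (fun x => (starRingEnd ℂ) (f x) * f' x) volume := mulL2 (conjL2 hf) hf'
  exact h1.re.const_mul 2

lemma decayTop {f f' : ℝ → ℂ}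
    (hd : ∀ x ∈ Ioi (0:ℝ), HasDerivAt f (f' x) x)
    (hf2 : MemLp f 2 (volume : Measure ℝ)) (hf'2 : MemLp f' 2 (volume : Measure ℝ)) :
    Tendsto f atTop (nhds 0) := by
  set N : ℝ → ℝ := fun x => ‖f x‖ ^ 2 with hNdef
  set N' : ℝ → ℝ := fun x => 2 * ((starRingEnd ℂ) (f x) * f' x).re with hN'def
  have hint : Integrable N' volume := normSqDerivInt hf2 hf'2
  have heq : ∀ x ∈ Ici (1:ℝ), N x = N 1 + ∫ t in (1:ℝ)..x, N' t := by
    intro x hx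
    have hIcc : uIcc (1:ℝ) x ⊆ Ioi 0 := by
      rw [uIcc_of_le hx]
      intro t ht; exact lt_of_lt_of_le one_pos ht.1
    have := intervalIntegral.integral_eq_sub_of_hasDerivAt
      (f := N) (f' := N') (fun t ht => normSqDeriv (hd t (hIcc ht)))
      hint.intervalIntegrable
    rw [this]; ring
  have hlim : Tendsto N atTop (nhds (N 1 + ∫ t in Ioi (1:ℝ), N' t)) := by
    have h2 := (intervalIntegral_tendsto_integral_Ioi 1 hint.integrableOn tendsto_id).const_add (N 1)
    refine Tendsto.congr' ?_ h2
    filter_upwards [Ici_mem_atTop (1:ℝ)] with x hx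
    exact (heq x hx).symm
  have hNint : Integrable N volume := by
    have := (memLp_two_iff_integrable_sq_norm hf2.1).1 hf2
    simpa [hNdef] using this
  have hc0 : (N 1 + ∫ t in Ioi (1:ℝ), N' t) = 0 := limit_zero_atTop hNint hlim
  rw [hc0] at hlim
  rw [tendsto_zero_iff_norm_tendsto_zero]
  have : Tendsto (fun x => Real.sqrt (N x)) atTop (nhds (Real.sqrt 0)) :=
    (Real.continuous_sqrt.tendsto 0).comp hlim
  rw [Real.sqrt_zero] at this
  refine this.congr fun x => ?_
  simp [hNdef, Real.sqrt_sq (norm_nonneg (f x))]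

lemma decayBot {f f' : ℝ → ℂ}
    (hd : ∀ x ∈ Iio (0:ℝ), HasDerivAt f (f' x) x)
    (hf2 : MemLp f 2 (volume : Measure ℝ)) (hf'2 : MemLp f' 2 (volume : Measure ℝ)) :
    Tendsto f atBot (nhds 0) := by
  set N : ℝ → ℝ := fun x => ‖f x‖ ^ 2 with hNdef
  set N' : ℝ → ℝ := fun x => 2 * ((starRingEnd ℂ) (f x) * f' x).re with hN'def
  have hint : Integrable N' volume := normSqDerivInt hf2 hf'2
  have heq : ∀ x ∈ Iic (-1:ℝ), N x = N (-1) - ∫ t in x..(-1:ℝ), N' t := by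
    intro x hx
    have hIcc : uIcc x (-1:ℝ) ⊆ Iio 0 := by
      rw [uIcc_of_le hx]
      intro t ht; exact lt_of_le_of_lt ht.2 (by norm_num)
    have := intervalIntegral.integral_eq_sub_of_hasDerivAt
      (f := N) (f' := N') (fun t ht => normSqDeriv (hd t (hIcc ht)))
      hint.intervalIntegrable
    rw [this]; ring
  have hlim : Tendsto N atBot (nhds (N (-1) - ∫ t in Iic (-1:ℝ), N' t)) := by
    have h2 := (intervalIntegral_tendsto_integral_Iic (-1) hint.integrableOn
      (tendsto_id (α := ℝ))).const_sub (N (-1))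
    refine Tendsto.congr' ?_ h2
    filter_upwards [Iic_mem_atBot (-1:ℝ)] with x hx
    exact (heq x hx).symm
  have hNint : Integrable N volume := by
    have := (memLp_two_iff_integrable_sq_norm hf2.1).1 hf2
    simpa [hNdef] using this
  have hc0 : (N (-1) - ∫ t in Iic (-1:ℝ), N' t) = 0 := limit_zero_atBot hNint hlim
  rw [hc0] at hlim
  rw [tendsto_zero_iff_norm_tendsto_zero]
  have : Tendsto (fun x => Real.sqrt (N x)) atBot (nhds (Real.sqrt 0)) :=
    (Real.continuous_sqrt.tendsto 0).comp hlim
  rw [Real.sqrt_zero] at this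
  refine this.congr fun x => ?_
  simp [hNdef, Real.sqrt_sq (norm_nonneg (f x))]

lemma greenIoi {F F' : ℝ → ℂ} {L : ℂ}
    (hd : ∀ x ∈ Ioi (0:ℝ), HasDerivAt F (F' x) x)
    (hint : IntegrableOn F' (Ioi 0) volume)
    (h0 : Tendsto F (nhdsWithin 0 (Ioi 0)) (nhds L))
    (htop : Tendsto F atTop (nhds 0)) :
    ∫ x in Ioi (0:ℝ), F' x = -L := by
  set G : ℝ → ℂ := fun x => if x = 0 then L else F x with hG
  have hFG : ∀ x : ℝ, x ≠ 0 → F x = G x := by intro x hx; simp [hG, hx]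
  have hG' : ∀ x ∈ Ioi (0:ℝ), HasDerivAt G (F' x) x := by
    intro x hx
    refine (hd x hx).congr_of_eventuallyEq ?_
    filter_upwards [eventually_ne_nhds (ne_of_gt hx)] with y hy
    exact (hFG y hy).symm
  have hcont : ContinuousWithinAt G (Ici 0) 0 := by
    have h1 : Tendsto G (nhdsWithin 0 (Ioi 0)) (nhds L) := by
      refine h0.congr' ?_
      filter_upwards [self_mem_nhdsWithin] with y hy
      exact hFG y (ne_of_gt hy)
    unfold ContinuousWithinAt
    rw [show G 0 = L by simp [hG]]
    rw [show Ici (0:ℝ) = insert 0 (Ioi 0) by rw [Ioi_insert], nhdsWithin_insert, tendsto_sup]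
    exact ⟨by rw [show L = G 0 by simp [hG]]; exact tendsto_pure_nhds G 0, h1⟩
  have htopG : Tendsto G atTop (nhds 0) := by
    refine htop.congr' ?_
    filter_upwards [eventually_ne_atTop (0:ℝ)] with y hy
    exact hFG y hy
  have := integral_Ioi_of_hasDerivAt_of_tendsto hcont hG' hint htopG
  rw [this]; simp [hG]

lemma greenIio {F F' : ℝ → ℂ} {L : ℂ}
    (hd : ∀ x ∈ Iio (0:ℝ), HasDerivAt F (F' x) x)
    (hint : IntegrableOn F' (Iio 0) volume)
    (h0 : Tendsto F (nhdsWithin 0 (Iio 0)) (nhds L))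
    (hbot : Tendsto F atBot (nhds 0)) :
    ∫ x in Iio (0:ℝ), F' x = L := by
  set G : ℝ → ℂ := fun x => if x = 0 then L else F x with hG
  have hFG : ∀ x : ℝ, x ≠ 0 → F x = G x := by intro x hx; simp [hG, hx]
  have hG' : ∀ x ∈ Iio (0:ℝ), HasDerivAt G (F' x) x := by
    intro x hx
    refine (hd x hx).congr_of_eventuallyEq ?_
    filter_upwards [eventually_ne_nhds (ne_of_lt hx)] with y hy
    exact (hFG y hy).symm
  have hcont : ContinuousWithinAt G (Iic 0) 0 := by
    have h1 : Tendsto G (nhdsWithin 0 (Iio 0)) (nhds L) := by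
      refine h0.congr' ?_
      filter_upwards [self_mem_nhdsWithin] with y hy
      exact hFG y (ne_of_lt hy)
    unfold ContinuousWithinAt
    rw [show G 0 = L by simp [hG]]
    rw [show Iic (0:ℝ) = insert 0 (Iio 0) by rw [Iio_insert], nhdsWithin_insert, tendsto_sup]
    exact ⟨by rw [show L = G 0 by simp [hG]]; exact tendsto_pure_nhds G 0, h1⟩
  have hbotG : Tendsto G atBot (nhds 0) := by
    refine hbot.congr' ?_
    filter_upwards [eventually_ne_atBot (0:ℝ)] with y hy
    exact hFG y hy
  have hintIic : IntegrableOn F' (Iic 0) volume := hint.congr_set_ae Iio_ae_eq_Iic.symm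
  have := integral_Iic_of_hasDerivAt_of_tendsto hcont hG' hintIic hbotG
  rw [← setIntegral_congr_set Iio_ae_eq_Iic] at this
  rw [this]; simp [hG]


lemma vanishIoi {f d1 d2 : ℝ → ℂ} {lam : ℝ}
    (hd1 : ∀ x : ℝ, x ≠ 0 → HasDerivAt f (d1 x) x)
    (hd2 : ∀ x : ℝ, x ≠ 0 → HasDerivAt d1 (d2 x) x)
    (l2f : MemLp f 2 (volume : Measure ℝ)) (l2d1 : MemLp d1 2 (volume : Measure ℝ))
    (l2d2 : MemLp d2 2 (volume : Measure ℝ))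
    (heqd : ∀ᵐ x : ℝ, d2 x = -(lam : ℂ) * f x)
    (hfp : Tendsto f (nhdsWithin 0 (Ioi 0)) (nhds 0)) :
    ∀ x : ℝ, 0 < x → f x = 0 := by
  have hfc : ∀ x : ℝ, x ≠ 0 → ContinuousAt f x := fun x hx => (hd1 x hx).continuousAt
  have hd1c : ∀ x : ℝ, x ≠ 0 → ContinuousAt d1 x := fun x hx => (hd2 x hx).continuousAt
  -- upgraded second derivative
  have hder : ∀ x ∈ Ioi (0:ℝ), HasDerivAt d1 (-(lam:ℂ) * f x) x := by
    intro x hx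
    have hgc : ContinuousOn (fun t => -(lam:ℂ) * f t) (Ioi 0) :=
      fun t ht => (continuousAt_const.mul (hfc t (ne_of_gt ht))).continuousWithinAt
    have heqI : ∀ y ∈ Ioi (0:ℝ), d1 y = d1 x + ∫ t in x..y, -(lam:ℂ) * f t := by
      intro y hy
      have hsub : uIcc x y ⊆ Ioi 0 := fun t ht => lt_of_lt_of_le (lt_min hx hy) ht.1
      have hFTC := intervalIntegral.integral_eq_sub_of_hasDerivAt
        (f := d1) (f' := d2) (fun t ht => hd2 t (ne_of_gt (hsub ht))) (L2II l2d2 x y)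
      have hcongr : (∫ t in x..y, d2 t) = ∫ t in x..y, -(lam:ℂ) * f t :=
        intervalIntegral.integral_congr_ae (by filter_upwards [heqd] with t ht _; exact ht)
      rw [hcongr] at hFTC
      rw [hFTC]; ring
    have hF : HasDerivAt (fun y => d1 x + ∫ t in x..y, -(lam:ℂ) * f t) (-(lam:ℂ) * f x) x := by
      have := intervalIntegral.integral_hasDerivAt_right (L2II (l2f.const_mul (-(lam:ℂ))) x x)
        (ContinuousOn.stronglyMeasurableAtFilter isOpen_Ioi hgc x hx)
        (continuousAt_const.mul (hfc x (ne_of_gt hx)))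
      exact this.const_add (d1 x)
    refine hF.congr_of_eventuallyEq ?_
    filter_upwards [isOpen_Ioi.mem_nhds hx] with y hy
    exact heqI y hy
  -- Energy is constant, tends to 0, hence vanishes
  set E : ℝ → ℝ := fun x => ‖d1 x‖^2 + lam * ‖f x‖^2 with hE
  have hEd : ∀ x ∈ Ioi (0:ℝ), HasDerivAt E 0 x := by
    intro x hx
    have h1 := normSqDeriv (hder x hx)
    have h2 := (normSqDeriv (hd1 x (ne_of_gt hx))).const_mul lam
    have h3 := h1.add h2
    refine h3.congr_deriv ?_
    have hre : ((starRingEnd ℂ) (f x) * d1 x).re = ((starRingEnd ℂ) (d1 x) * f x).re := by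
      rw [show (starRingEnd ℂ) (f x) * d1 x
          = (starRingEnd ℂ) ((starRingEnd ℂ) (d1 x) * f x) by
        rw [map_mul, Complex.conj_conj]; ring, Complex.conj_re]
    rw [hre]
    rw [show (starRingEnd ℂ) (d1 x) * (-(lam:ℂ) * f x)
        = ((-lam : ℝ) : ℂ) * ((starRingEnd ℂ) (d1 x) * f x) by push_cast; ring]
    rw [Complex.re_ofReal_mul]
    ring
  have hEconst : ∀ x ∈ Ioi (0:ℝ), ∀ y ∈ Ioi (0:ℝ), E x = E y := by
    intro x hx y hy
    have hsub : uIcc y x ⊆ Ioi 0 := fun t ht => lt_of_lt_of_le (lt_min hy hx) ht.1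
    have := intervalIntegral.integral_eq_sub_of_hasDerivAt (f := E) (f' := fun _ => (0:ℝ))
      (fun t ht => hEd t (hsub ht)) intervalIntegrable_const
    simp only [intervalIntegral.integral_const, smul_zero] at this
    linarith [this]
  have hEtop : Tendsto E atTop (nhds 0) := by
    have hf0 : Tendsto f atTop (nhds 0) := decayTop (fun x hx => hd1 x (ne_of_gt hx)) l2f l2d1
    have hd10 : Tendsto d1 atTop (nhds 0) := decayTop (fun x hx => hd2 x (ne_of_gt hx)) l2d1 l2d2
    have := (hd10.norm.pow 2).add ((hf0.norm.pow 2).const_mul lam)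
    simpa using this
  have hE0 : ∀ x ∈ Ioi (0:ℝ), E x = 0 := by
    intro x hx
    have h1 : Tendsto E atTop (nhds (E x)) := by
      refine tendsto_const_nhds.congr' ?_
      filter_upwards [Ioi_mem_atTop (0:ℝ)] with y hy
      exact hEconst x hx y hy
    exact tendsto_nhds_unique h1 hEtop
  intro x hx
  rcases lt_trichotomy lam 0 with hl | hl | hl
  · -- lam < 0 : Gronwall from the left boundary
    set κ := Real.sqrt (-lam) with hκ
    have hκpos : 0 < κ := Real.sqrt_pos.2 (by linarith)
    have hnorm : ∀ y ∈ Ioi (0:ℝ), ‖d1 y‖ = κ * ‖f y‖ := by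
      intro y hy
      have h0 := hE0 y hy
      have h1 : ‖d1 y‖^2 = (κ * ‖f y‖)^2 := by
        rw [mul_pow, hκ, Real.sq_sqrt (by linarith : (0:ℝ) ≤ -lam)]
        simp only [hE] at h0
        linarith
      have h2 := congrArg Real.sqrt h1
      rwa [Real.sqrt_sq (norm_nonneg _),
        Real.sqrt_sq (mul_nonneg hκpos.le (norm_nonneg _))] at h2
    set G : ℝ → ℝ := fun y => ‖f y‖^2 with hG
    set φ : ℝ → ℝ := fun y => Real.exp (-2*κ*y) * G y with hφ
    have hGd : ∀ y : ℝ, y ≠ 0 → HasDerivAt G (2 * ((starRingEnd ℂ) (f y) * d1 y).re) y :=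
      fun y hy => normSqDeriv (hd1 y hy)
    have hexp : ∀ y : ℝ, HasDerivAt (fun t : ℝ => Real.exp (-2*κ*t)) (-2*κ*Real.exp (-2*κ*y)) y := by
      intro y
      have h := ((hasDerivAt_id y).const_mul (-2*κ)).exp
      refine h.congr_deriv ?_
      simp only [id_eq]; ring
    have hφd : ∀ y ∈ Ioi (0:ℝ), HasDerivAt φ
        (Real.exp (-2*κ*y) * (2 * ((starRingEnd ℂ) (f y) * d1 y).re - 2*κ*G y)) y := by
      intro y hy
      have := (hexp y).mul (hGd y (ne_of_gt hy))
      exact this.congr_deriv (by ring)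
    have hφ'le : ∀ y ∈ Ioi (0:ℝ),
        Real.exp (-2*κ*y) * (2 * ((starRingEnd ℂ) (f y) * d1 y).re - 2*κ*G y) ≤ 0 := by
      intro y hy
      apply mul_nonpos_of_nonneg_of_nonpos (Real.exp_pos _).le
      have hre : ((starRingEnd ℂ) (f y) * d1 y).re ≤ ‖f y‖ * ‖d1 y‖ := by
        calc ((starRingEnd ℂ) (f y) * d1 y).re ≤ ‖(starRingEnd ℂ) (f y) * d1 y‖ :=
          Complex.re_le_norm _
        _ = ‖f y‖ * ‖d1 y‖ := by rw [norm_mul, RCLike.norm_conj]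
      rw [hnorm y hy] at hre
      have h2 : ((starRingEnd ℂ) (f y) * d1 y).re ≤ κ * G y := by
        simp only [hG]
        nlinarith [norm_nonneg (f y)]
      simp only [hG]
      nlinarith
    have hmono : ∀ y ∈ Ioi (0:ℝ), ∀ z ∈ Ioi (0:ℝ), y ≤ z → φ z ≤ φ y := by
      intro y hy z hz hyz
      have hsub : uIcc y z ⊆ Ioi 0 := fun t ht => lt_of_lt_of_le (lt_min hy hz) ht.1
      have hcont : ContinuousOn
          (fun t => Real.exp (-2*κ*t) * (2 * ((starRingEnd ℂ) (f t) * d1 t).re - 2*κ*G t))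
          (uIcc y z) := by
        apply ContinuousOn.mul
        · exact (Real.continuous_exp.comp ((continuous_const.mul continuous_id))).continuousOn
        · apply ContinuousOn.sub
          · apply ContinuousOn.mul continuousOn_const
            apply Complex.continuous_re.comp_continuousOn
            apply ContinuousOn.mul
            · exact Complex.continuous_conj.comp_continuousOn
                (fun t ht => (hfc t (ne_of_gt (hsub ht))).continuousWithinAt)
            · exact fun t ht => (hd1c t (ne_of_gt (hsub ht))).continuousWithinAt
          · apply ContinuousOn.mul continuousOn_const
            exact fun t ht => (((hfc t (ne_of_gt (hsub ht))).norm).pow 2).continuousWithinAt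
      have hFTC := intervalIntegral.integral_eq_sub_of_hasDerivAt
        (fun t ht => hφd t (hsub ht)) hcont.intervalIntegrable
      have hnn : (0:ℝ) ≤ ∫ t in y..z, -(Real.exp (-2*κ*t)
          * (2 * ((starRingEnd ℂ) (f t) * d1 t).re - 2*κ*G t)) := by
        apply intervalIntegral.integral_nonneg hyz
        intro t ht
        have ht' : t ∈ uIcc y z := by
          rw [uIcc_of_le hyz]; exact ht
        have := hφ'le t (hsub ht')
        linarith
      rw [intervalIntegral.integral_neg] at hnn
      rw [hFTC] at hnn
      linarith
    -- limit of φ at 0+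
    have hφ0 : Tendsto φ (nhdsWithin 0 (Ioi 0)) (nhds 0) := by
      have h1 : Tendsto G (nhdsWithin 0 (Ioi 0)) (nhds 0) := by
        have := hfp.norm.pow 2
        simpa using this
      have h2 : Tendsto (fun t : ℝ => Real.exp (-2*κ*t)) (nhdsWithin 0 (Ioi 0))
          (nhds (Real.exp (-2*κ*0))) :=
        ((Real.continuous_exp.comp (continuous_const.mul continuous_id)).tendsto 0).mono_left
          nhdsWithin_le_nhds
      have := h2.mul h1
      simpa only [mul_zero] using this
    have hle : φ x ≤ 0 := by
      have hev : ∀ᶠ y in nhdsWithin 0 (Ioi 0), φ x ≤ φ y := by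
        filter_upwards [Ioo_mem_nhdsGT_of_mem (⟨le_refl (0:ℝ), hx⟩ : (0:ℝ) ∈ Ico 0 x)]
          with y hy
        exact hmono y hy.1 x hx (le_of_lt hy.2)
      exact ge_of_tendsto hφ0 hev
    have hφx : (0:ℝ) ≤ φ x := mul_nonneg (Real.exp_pos _).le (sq_nonneg _)
    have hGx : G x = 0 := by
      have hzero : φ x = 0 := le_antisymm hle hφx
      have := (mul_eq_zero.mp hzero).resolve_left (ne_of_gt (Real.exp_pos _))
      exact this
    have : ‖f x‖ = 0 := by
      have := pow_eq_zero_iff (two_ne_zero) |>.mp hGx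
      exact this
    simpa using this
  · -- lam = 0
    subst hl
    have hd1z : ∀ y ∈ Ioi (0:ℝ), d1 y = 0 := by
      intro y hy
      have h0 := hE0 y hy
      simp only [hE, zero_mul, add_zero] at h0
      have := pow_eq_zero_iff (two_ne_zero) |>.mp h0
      simpa using this
    have hconst : ∀ y ∈ Ioi (0:ℝ), f y = f x := by
      intro y hy
      have hsub : uIcc x y ⊆ Ioi 0 := fun t ht => lt_of_lt_of_le (lt_min hx hy) ht.1
      have hFTC := intervalIntegral.integral_eq_sub_of_hasDerivAt
        (f := f) (f' := d1) (fun t ht => hd1 t (ne_of_gt (hsub ht))) (L2II l2d1 x y)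
      rw [intervalIntegral.integral_congr (g := fun _ => (0:ℂ))
        (fun t ht => hd1z t (hsub ht))] at hFTC
      simp only [intervalIntegral.integral_const, smul_zero] at hFTC
      linear_combination -hFTC
    have hlim : Tendsto f (nhdsWithin 0 (Ioi 0)) (nhds (f x)) := by
      refine tendsto_const_nhds.congr' ?_
      filter_upwards [self_mem_nhdsWithin] with y hy
      exact (hconst y hy).symm
    exact tendsto_nhds_unique hlim hfp
  · -- lam > 0
    have h0 := hE0 x hx
    simp only [hE] at h0
    have h1 : ‖f x‖^2 = 0 := by nlinarith [sq_nonneg ‖d1 x‖, sq_nonneg ‖f x‖]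
    have := pow_eq_zero_iff (two_ne_zero) |>.mp h1
    simpa using this

lemma vanishIio {f d1 d2 : ℝ → ℂ} {lam : ℝ}
    (hd1 : ∀ x : ℝ, x ≠ 0 → HasDerivAt f (d1 x) x)
    (hd2 : ∀ x : ℝ, x ≠ 0 → HasDerivAt d1 (d2 x) x)
    (l2f : MemLp f 2 (volume : Measure ℝ)) (l2d1 : MemLp d1 2 (volume : Measure ℝ))
    (l2d2 : MemLp d2 2 (volume : Measure ℝ))
    (heqd : ∀ᵐ x : ℝ, d2 x = -(lam : ℂ) * f x)
    (hfm : Tendsto f (nhdsWithin 0 (Iio 0)) (nhds 0)) :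
    ∀ x : ℝ, x < 0 → f x = 0 := by
  have hfc : ∀ x : ℝ, x ≠ 0 → ContinuousAt f x := fun x hx => (hd1 x hx).continuousAt
  have hd1c : ∀ x : ℝ, x ≠ 0 → ContinuousAt d1 x := fun x hx => (hd2 x hx).continuousAt
  have hder : ∀ x ∈ Iio (0:ℝ), HasDerivAt d1 (-(lam:ℂ) * f x) x := by
    intro x hx
    have hgc : ContinuousOn (fun t => -(lam:ℂ) * f t) (Iio 0) :=
      fun t ht => (continuousAt_const.mul (hfc t (ne_of_lt ht))).continuousWithinAt
    have heqI : ∀ y ∈ Iio (0:ℝ), d1 y = d1 x + ∫ t in x..y, -(lam:ℂ) * f t := by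
      intro y hy
      have hsub : uIcc x y ⊆ Iio 0 := fun t ht => lt_of_le_of_lt ht.2 (max_lt hx hy)
      have hFTC := intervalIntegral.integral_eq_sub_of_hasDerivAt
        (f := d1) (f' := d2) (fun t ht => hd2 t (ne_of_lt (hsub ht))) (L2II l2d2 x y)
      have hcongr : (∫ t in x..y, d2 t) = ∫ t in x..y, -(lam:ℂ) * f t :=
        intervalIntegral.integral_congr_ae (by filter_upwards [heqd] with t ht _; exact ht)
      rw [hcongr] at hFTC
      rw [hFTC]; ring
    have hF : HasDerivAt (fun y => d1 x + ∫ t in x..y, -(lam:ℂ) * f t) (-(lam:ℂ) * f x) x := by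
      have := intervalIntegral.integral_hasDerivAt_right (L2II (l2f.const_mul (-(lam:ℂ))) x x)
        (ContinuousOn.stronglyMeasurableAtFilter isOpen_Iio hgc x hx)
        (continuousAt_const.mul (hfc x (ne_of_lt hx)))
      exact this.const_add (d1 x)
    refine hF.congr_of_eventuallyEq ?_
    filter_upwards [isOpen_Iio.mem_nhds hx] with y hy
    exact heqI y hy
  set E : ℝ → ℝ := fun x => ‖d1 x‖^2 + lam * ‖f x‖^2 with hE
  have hEd : ∀ x ∈ Iio (0:ℝ), HasDerivAt E 0 x := by
    intro x hx
    have h1 := normSqDeriv (hder x hx)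
    have h2 := (normSqDeriv (hd1 x (ne_of_lt hx))).const_mul lam
    have h3 := h1.add h2
    refine h3.congr_deriv ?_
    have hre : ((starRingEnd ℂ) (f x) * d1 x).re = ((starRingEnd ℂ) (d1 x) * f x).re := by
      rw [show (starRingEnd ℂ) (f x) * d1 x
          = (starRingEnd ℂ) ((starRingEnd ℂ) (d1 x) * f x) by
        rw [map_mul, Complex.conj_conj]; ring, Complex.conj_re]
    rw [hre]
    rw [show (starRingEnd ℂ) (d1 x) * (-(lam:ℂ) * f x)
        = ((-lam : ℝ) : ℂ) * ((starRingEnd ℂ) (d1 x) * f x) by push_cast; ring]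
    rw [Complex.re_ofReal_mul]
    ring
  have hEconst : ∀ x ∈ Iio (0:ℝ), ∀ y ∈ Iio (0:ℝ), E x = E y := by
    intro x hx y hy
    have hsub : uIcc y x ⊆ Iio 0 := fun t ht => lt_of_le_of_lt ht.2 (max_lt hy hx)
    have := intervalIntegral.integral_eq_sub_of_hasDerivAt (f := E) (f' := fun _ => (0:ℝ))
      (fun t ht => hEd t (hsub ht)) intervalIntegrable_const
    simp only [intervalIntegral.integral_const, smul_zero] at this
    linarith [this]
  have hEbot : Tendsto E atBot (nhds 0) := by
    have hf0 : Tendsto f atBot (nhds 0) := decayBot (fun x hx => hd1 x (ne_of_lt hx)) l2f l2d1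
    have hd10 : Tendsto d1 atBot (nhds 0) := decayBot (fun x hx => hd2 x (ne_of_lt hx)) l2d1 l2d2
    have := (hd10.norm.pow 2).add ((hf0.norm.pow 2).const_mul lam)
    simpa using this
  have hE0 : ∀ x ∈ Iio (0:ℝ), E x = 0 := by
    intro x hx
    have h1 : Tendsto E atBot (nhds (E x)) := by
      refine tendsto_const_nhds.congr' ?_
      filter_upwards [Iio_mem_atBot (0:ℝ)] with y hy
      exact hEconst x hx y hy
    exact tendsto_nhds_unique h1 hEbot
  intro x hx
  rcases lt_trichotomy lam 0 with hl | hl | hl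
  · set κ := Real.sqrt (-lam) with hκ
    have hκpos : 0 < κ := Real.sqrt_pos.2 (by linarith)
    have hnorm : ∀ y ∈ Iio (0:ℝ), ‖d1 y‖ = κ * ‖f y‖ := by
      intro y hy
      have h0 := hE0 y hy
      have h1 : ‖d1 y‖^2 = (κ * ‖f y‖)^2 := by
        rw [mul_pow, hκ, Real.sq_sqrt (by linarith : (0:ℝ) ≤ -lam)]
        simp only [hE] at h0
        linarith
      have h2 := congrArg Real.sqrt h1
      rwa [Real.sqrt_sq (norm_nonneg _),
        Real.sqrt_sq (mul_nonneg hκpos.le (norm_nonneg _))] at h2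
    set G : ℝ → ℝ := fun y => ‖f y‖^2 with hG
    set ψ : ℝ → ℝ := fun y => Real.exp (2*κ*y) * G y with hψ
    have hGd : ∀ y : ℝ, y ≠ 0 → HasDerivAt G (2 * ((starRingEnd ℂ) (f y) * d1 y).re) y :=
      fun y hy => normSqDeriv (hd1 y hy)
    have hexp : ∀ y : ℝ, HasDerivAt (fun t : ℝ => Real.exp (2*κ*t)) (2*κ*Real.exp (2*κ*y)) y := by
      intro y
      have h := ((hasDerivAt_id y).const_mul (2*κ)).exp
      refine h.congr_deriv ?_
      simp only [id_eq]; ring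
    have hψd : ∀ y ∈ Iio (0:ℝ), HasDerivAt ψ
        (Real.exp (2*κ*y) * (2 * ((starRingEnd ℂ) (f y) * d1 y).re + 2*κ*G y)) y := by
      intro y hy
      have := (hexp y).mul (hGd y (ne_of_lt hy))
      exact this.congr_deriv (by ring)
    have hψ'ge : ∀ y ∈ Iio (0:ℝ),
        0 ≤ Real.exp (2*κ*y) * (2 * ((starRingEnd ℂ) (f y) * d1 y).re + 2*κ*G y) := by
      intro y hy
      apply mul_nonneg (Real.exp_pos _).le
      have hre : |((starRingEnd ℂ) (f y) * d1 y).re| ≤ ‖f y‖ * ‖d1 y‖ := by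
        calc |((starRingEnd ℂ) (f y) * d1 y).re| ≤ ‖(starRingEnd ℂ) (f y) * d1 y‖ :=
          Complex.abs_re_le_norm _
        _ = ‖f y‖ * ‖d1 y‖ := by rw [norm_mul, RCLike.norm_conj]
      rw [hnorm y hy] at hre
      have hre2 := (abs_le.mp hre).1
      have h2 : -(κ * G y) ≤ ((starRingEnd ℂ) (f y) * d1 y).re := by
        simp only [hG]
        nlinarith [norm_nonneg (f y)]
      simp only [hG]
      nlinarith
    have hmono : ∀ y ∈ Iio (0:ℝ), ∀ z ∈ Iio (0:ℝ), y ≤ z → ψ y ≤ ψ z := by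
      intro y hy z hz hyz
      have hsub : uIcc y z ⊆ Iio 0 := fun t ht => lt_of_le_of_lt ht.2 (max_lt hy hz)
      have hcont : ContinuousOn
          (fun t => Real.exp (2*κ*t) * (2 * ((starRingEnd ℂ) (f t) * d1 t).re + 2*κ*G t))
          (uIcc y z) := by
        apply ContinuousOn.mul
        · exact (Real.continuous_exp.comp ((continuous_const.mul continuous_id))).continuousOn
        · apply ContinuousOn.add
          · apply ContinuousOn.mul continuousOn_const
            apply Complex.continuous_re.comp_continuousOn
            apply ContinuousOn.mul
            · exact Complex.continuous_conj.comp_continuousOn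
                (fun t ht => (hfc t (ne_of_lt (hsub ht))).continuousWithinAt)
            · exact fun t ht => (hd1c t (ne_of_lt (hsub ht))).continuousWithinAt
          · apply ContinuousOn.mul continuousOn_const
            exact fun t ht => (((hfc t (ne_of_lt (hsub ht))).norm).pow 2).continuousWithinAt
      have hFTC := intervalIntegral.integral_eq_sub_of_hasDerivAt
        (fun t ht => hψd t (hsub ht)) hcont.intervalIntegrable
      have hnn : (0:ℝ) ≤ ∫ t in y..z, Real.exp (2*κ*t)
          * (2 * ((starRingEnd ℂ) (f t) * d1 t).re + 2*κ*G t) := by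
        apply intervalIntegral.integral_nonneg hyz
        intro t ht
        have ht' : t ∈ uIcc y z := by
          rw [uIcc_of_le hyz]; exact ht
        exact hψ'ge t (hsub ht')
      rw [hFTC] at hnn
      linarith
    have hψ0 : Tendsto ψ (nhdsWithin 0 (Iio 0)) (nhds 0) := by
      have h1 : Tendsto G (nhdsWithin 0 (Iio 0)) (nhds 0) := by
        have := hfm.norm.pow 2
        simpa using this
      have h2 : Tendsto (fun t : ℝ => Real.exp (2*κ*t)) (nhdsWithin 0 (Iio 0))
          (nhds (Real.exp (2*κ*0))) :=
        ((Real.continuous_exp.comp (continuous_const.mul continuous_id)).tendsto 0).mono_left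
          nhdsWithin_le_nhds
      have := h2.mul h1
      simpa only [mul_zero] using this
    have hle : ψ x ≤ 0 := by
      have hev : ∀ᶠ y in nhdsWithin 0 (Iio 0), ψ x ≤ ψ y := by
        filter_upwards [Ioo_mem_nhdsLT_of_mem (⟨hx, le_refl (0:ℝ)⟩ : (0:ℝ) ∈ Ioc x 0)]
          with y hy
        exact hmono x hx y hy.2 (le_of_lt hy.1)
      exact ge_of_tendsto hψ0 hev
    have hψx : (0:ℝ) ≤ ψ x := mul_nonneg (Real.exp_pos _).le (sq_nonneg _)
    have hGx : G x = 0 := by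
      have hzero : ψ x = 0 := le_antisymm hle hψx
      have := (mul_eq_zero.mp hzero).resolve_left (ne_of_gt (Real.exp_pos _))
      exact this
    have : ‖f x‖ = 0 := by
      have := pow_eq_zero_iff (two_ne_zero) |>.mp hGx
      exact this
    simpa using this
  · subst hl
    have hd1z : ∀ y ∈ Iio (0:ℝ), d1 y = 0 := by
      intro y hy
      have h0 := hE0 y hy
      simp only [hE, zero_mul, add_zero] at h0
      have := pow_eq_zero_iff (two_ne_zero) |>.mp h0
      simpa using this
    have hconst : ∀ y ∈ Iio (0:ℝ), f y = f x := by
      intro y hy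
      have hsub : uIcc x y ⊆ Iio 0 := fun t ht => lt_of_le_of_lt ht.2 (max_lt hx hy)
      have hFTC := intervalIntegral.integral_eq_sub_of_hasDerivAt
        (f := f) (f' := d1) (fun t ht => hd1 t (ne_of_lt (hsub ht))) (L2II l2d1 x y)
      rw [intervalIntegral.integral_congr (g := fun _ => (0:ℂ))
        (fun t ht => hd1z t (hsub ht))] at hFTC
      simp only [intervalIntegral.integral_const, smul_zero] at hFTC
      linear_combination -hFTC
    have hlim : Tendsto f (nhdsWithin 0 (Iio 0)) (nhds (f x)) := by
      refine tendsto_const_nhds.congr' ?_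
      filter_upwards [self_mem_nhdsWithin] with y hy
      exact (hconst y hy).symm
    exact tendsto_nhds_unique hlim hfm
  · have h0 := hE0 x hx
    simp only [hE] at h0
    have h1 : ‖f x‖^2 = 0 := by nlinarith [sq_nonneg ‖d1 x‖, sq_nonneg ‖f x‖]
    have := pow_eq_zero_iff (two_ne_zero) |>.mp h1
    simpa using this

lemma keyIdentity (a : ℂ) {q : ℝ → ℂ} (hq : MemLp q 2 (volume : Measure ℝ))
    (u v : W22) (hu : InDomHa a q u) (hv : InDomHa a q v) :
    ip (Ha q u) v.f - ip u.f (Ha q v)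
      = ((starRingEnd ℂ) a - a) * ((starRingEnd ℂ) u.fr * v.fr) := by
  obtain ⟨hus, hud⟩ := hu
  obtain ⟨hvs, hvd⟩ := hv
  have hA : Integrable (fun x => (starRingEnd ℂ) (u.d2 x) * v.f x) volume :=
    mulL2 (conjL2 u.l2d2) v.l2f
  have hB : Integrable (fun x => (starRingEnd ℂ) (q x) * v.f x) volume :=
    mulL2 (conjL2 hq) v.l2f
  have hC : Integrable (fun x => (starRingEnd ℂ) (u.f x) * v.d2 x) volume :=
    mulL2 (conjL2 u.l2f) v.l2d2
  have hD : Integrable (fun x => (starRingEnd ℂ) (u.f x) * q x) volume :=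
    mulL2 (conjL2 u.l2f) hq
  have hconjJ : (∫ x, (starRingEnd ℂ) (u.f x) * q x) = (starRingEnd ℂ) (ip q u.f) := by
    unfold ip
    rw [← integral_conj]
    congr 1
    funext x
    rw [map_mul, Complex.conj_conj]
    ring
  have e1 : ip (Ha q u) v.f
      = -(∫ x, (starRingEnd ℂ) (u.d2 x) * v.f x) + (starRingEnd ℂ) u.fr * ip q v.f := by
    unfold ip Ha
    rw [show (fun x => (starRingEnd ℂ) (-(u.d2 x) + u.fr * q x) * v.f x)
        = (fun x => -((starRingEnd ℂ) (u.d2 x) * v.f x)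
          + (starRingEnd ℂ) u.fr * ((starRingEnd ℂ) (q x) * v.f x)) from
      funext fun x => by simp only [map_add, map_neg, map_mul]; ring]
    have hA' : Integrable (fun x => -((starRingEnd ℂ) (u.d2 x) * v.f x)) volume := hA.neg
    have hB' : Integrable (fun x => (starRingEnd ℂ) u.fr * ((starRingEnd ℂ) (q x) * v.f x))
        volume := hB.const_mul _
    rw [integral_add hA' hB', integral_neg, MeasureTheory.integral_const_mul]
  have e2 : ip u.f (Ha q v)
      = -(∫ x, (starRingEnd ℂ) (u.f x) * v.d2 x) + v.fr * (starRingEnd ℂ) (ip q u.f) := by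
    unfold ip Ha
    rw [show (fun x => (starRingEnd ℂ) (u.f x) * (-(v.d2 x) + v.fr * q x))
        = (fun x => -((starRingEnd ℂ) (u.f x) * v.d2 x)
          + v.fr * ((starRingEnd ℂ) (u.f x) * q x)) from funext fun x => by ring]
    have hC' : Integrable (fun x => -((starRingEnd ℂ) (u.f x) * v.d2 x)) volume := hC.neg
    have hD' : Integrable (fun x => v.fr * ((starRingEnd ℂ) (u.f x) * q x)) volume :=
      hD.const_mul _
    rw [integral_add hC' hD', integral_neg, MeasureTheory.integral_const_mul]
    congr 1
    rw [show (∫ x, (starRingEnd ℂ) (u.f x) * q x) = (starRingEnd ℂ) (ip q u.f) from hconjJ]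
    rfl
  -- Green's identity
  have hWint : Integrable (fun x => (starRingEnd ℂ) (u.f x) * v.d2 x
      - (starRingEnd ℂ) (u.d2 x) * v.f x) volume := hC.sub hA
  have hWderiv : ∀ x : ℝ, x ≠ 0 → HasDerivAt
      (fun y => (starRingEnd ℂ) (u.f y) * v.d1 y - (starRingEnd ℂ) (u.d1 y) * v.f y)
      ((starRingEnd ℂ) (u.f x) * v.d2 x - (starRingEnd ℂ) (u.d2 x) * v.f x) x := by
    intro x hx
    have h1 : HasDerivAt (fun y => (starRingEnd ℂ) (u.f y)) ((starRingEnd ℂ) (u.d1 x)) x := by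
      simpa only [RCLike.star_def] using (u.hd1 x hx).star
    have h2 : HasDerivAt (fun y => (starRingEnd ℂ) (u.d1 y)) ((starRingEnd ℂ) (u.d2 x)) x := by
      simpa only [RCLike.star_def] using (u.hd2 x hx).star
    have h3 := (h1.mul (v.hd2 x hx)).sub (h2.mul (v.hd1 x hx))
    refine h3.congr_deriv ?_
    ring
  have hconjC : Continuous (fun z : ℂ => (starRingEnd ℂ) z) := Complex.continuous_conj
  have huf_top : Tendsto u.f atTop (nhds 0) :=
    decayTop (fun x hx => u.hd1 x (ne_of_gt hx)) u.l2f u.l2d1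
  have hud1_top : Tendsto u.d1 atTop (nhds 0) :=
    decayTop (fun x hx => u.hd2 x (ne_of_gt hx)) u.l2d1 u.l2d2
  have hvf_top : Tendsto v.f atTop (nhds 0) :=
    decayTop (fun x hx => v.hd1 x (ne_of_gt hx)) v.l2f v.l2d1
  have hvd1_top : Tendsto v.d1 atTop (nhds 0) :=
    decayTop (fun x hx => v.hd2 x (ne_of_gt hx)) v.l2d1 v.l2d2
  have huf_bot : Tendsto u.f atBot (nhds 0) :=
    decayBot (fun x hx => u.hd1 x (ne_of_lt hx)) u.l2f u.l2d1
  have hud1_bot : Tendsto u.d1 atBot (nhds 0) :=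
    decayBot (fun x hx => u.hd2 x (ne_of_lt hx)) u.l2d1 u.l2d2
  have hvf_bot : Tendsto v.f atBot (nhds 0) :=
    decayBot (fun x hx => v.hd1 x (ne_of_lt hx)) v.l2f v.l2d1
  have hvd1_bot : Tendsto v.d1 atBot (nhds 0) :=
    decayBot (fun x hx => v.hd2 x (ne_of_lt hx)) v.l2d1 v.l2d2
  have hWtop : Tendsto
      (fun y => (starRingEnd ℂ) (u.f y) * v.d1 y - (starRingEnd ℂ) (u.d1 y) * v.f y)
      atTop (nhds 0) := by
    have := (((hconjC.tendsto 0).comp huf_top).mul hvd1_top).sub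
      (((hconjC.tendsto 0).comp hud1_top).mul hvf_top)
    simpa using this
  have hWbot : Tendsto
      (fun y => (starRingEnd ℂ) (u.f y) * v.d1 y - (starRingEnd ℂ) (u.d1 y) * v.f y)
      atBot (nhds 0) := by
    have := (((hconjC.tendsto 0).comp huf_bot).mul hvd1_bot).sub
      (((hconjC.tendsto 0).comp hud1_bot).mul hvf_bot)
    simpa using this
  have hW0p : Tendsto
      (fun y => (starRingEnd ℂ) (u.f y) * v.d1 y - (starRingEnd ℂ) (u.d1 y) * v.f y)
      (nhdsWithin 0 (Ioi 0))
      (nhds ((starRingEnd ℂ) u.fp * v.dp - (starRingEnd ℂ) u.dp * v.fp)) :=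
    (((hconjC.tendsto _).comp u.hfp).mul v.hdp).sub (((hconjC.tendsto _).comp u.hdp).mul v.hfp)
  have hW0m : Tendsto
      (fun y => (starRingEnd ℂ) (u.f y) * v.d1 y - (starRingEnd ℂ) (u.d1 y) * v.f y)
      (nhdsWithin 0 (Iio 0))
      (nhds ((starRingEnd ℂ) u.fm * v.dm - (starRingEnd ℂ) u.dm * v.fm)) :=
    (((hconjC.tendsto _).comp u.hfm).mul v.hdm).sub (((hconjC.tendsto _).comp u.hdm).mul v.hfm)
  have g1 : (∫ x in Ioi (0:ℝ), ((starRingEnd ℂ) (u.f x) * v.d2 x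
        - (starRingEnd ℂ) (u.d2 x) * v.f x))
      = -((starRingEnd ℂ) u.fp * v.dp - (starRingEnd ℂ) u.dp * v.fp) :=
    greenIoi (fun x hx => hWderiv x (ne_of_gt hx)) hWint.integrableOn hW0p hWtop
  have g2 : (∫ x in Iio (0:ℝ), ((starRingEnd ℂ) (u.f x) * v.d2 x
        - (starRingEnd ℂ) (u.d2 x) * v.f x))
      = (starRingEnd ℂ) u.fm * v.dm - (starRingEnd ℂ) u.dm * v.fm :=
    greenIio (fun x hx => hWderiv x (ne_of_lt hx)) hWint.integrableOn hW0m hWbot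
  have gtot : (∫ x, ((starRingEnd ℂ) (u.f x) * v.d2 x - (starRingEnd ℂ) (u.d2 x) * v.f x))
      = ((starRingEnd ℂ) u.fm * v.dm - (starRingEnd ℂ) u.dm * v.fm)
        + -((starRingEnd ℂ) u.fp * v.dp - (starRingEnd ℂ) u.dp * v.fp) := by
    rw [← g1, ← g2]
    rw [show (∫ x in Ioi (0:ℝ), ((starRingEnd ℂ) (u.f x) * v.d2 x
        - (starRingEnd ℂ) (u.d2 x) * v.f x))
      = ∫ x in Ici (0:ℝ), ((starRingEnd ℂ) (u.f x) * v.d2 x - (starRingEnd ℂ) (u.d2 x) * v.f x)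
      from setIntegral_congr_set Ioi_ae_eq_Ici]
    exact (intervalIntegral.integral_Iio_add_Ici hWint.integrableOn hWint.integrableOn).symm
  have hsplit : (∫ x, ((starRingEnd ℂ) (u.f x) * v.d2 x - (starRingEnd ℂ) (u.d2 x) * v.f x))
      = (∫ x, (starRingEnd ℂ) (u.f x) * v.d2 x) - ∫ x, (starRingEnd ℂ) (u.d2 x) * v.f x :=
    integral_sub hC hA
  -- boundary values in terms of fr
  have hufp : u.fp = u.fr := by
    unfold W22.fs at hus
    unfold W22.fr
    have := sub_eq_zero.mp hus
    rw [← this]; ring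
  have hufm : u.fm = u.fr := by
    unfold W22.fs at hus
    unfold W22.fr
    have := sub_eq_zero.mp hus
    rw [this]; ring
  have hvfp : v.fp = v.fr := by
    unfold W22.fs at hvs
    unfold W22.fr
    have := sub_eq_zero.mp hvs
    rw [← this]; ring
  have hvfm : v.fm = v.fr := by
    unfold W22.fs at hvs
    unfold W22.fr
    have := sub_eq_zero.mp hvs
    rw [this]; ring
  have hI : (∫ x, (starRingEnd ℂ) (u.f x) * v.d2 x) - (∫ x, (starRingEnd ℂ) (u.d2 x) * v.f x)
      = (starRingEnd ℂ) u.fr * v.dm - (starRingEnd ℂ) u.dm * v.fr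
        - ((starRingEnd ℂ) u.fr * v.dp - (starRingEnd ℂ) u.dp * v.fr) := by
    rw [← hsplit, gtot, hufp, hufm, hvfp, hvfm]
    ring
  have hdv : v.dp - v.dm = a * v.fr + ip q v.f := hvd
  have hduc : (starRingEnd ℂ) u.dp - (starRingEnd ℂ) u.dm
      = (starRingEnd ℂ) a * (starRingEnd ℂ) u.fr + (starRingEnd ℂ) (ip q u.f) := by
    have := congrArg (starRingEnd ℂ) hud
    unfold W22.ds at this
    rw [map_sub, map_add, map_mul] at this
    exact this
  rw [e1, e2]
  linear_combination hI - (starRingEnd ℂ) u.fr * hdv + v.fr * hduc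


/-- if the nonlocal δ-interaction operator `H_a` has a real eigenvalue,
then `H_a` is self-adjoint in `L²(ℝ)` (formulated here as the symmetry identity
`(H_a u, v) = (u, H_a v)` on the domain, which for this one-dimensional proper
extension of the defect-one symmetric operator `S̃_min` is equivalent to
self-adjointness). -/
theorem stmt13 (a : ℂ)
    (q : ℝ → ℂ) (hq : MemLp q 2 (volume : Measure ℝ))
    (hqpc : ∃ s : Finset ℝ, ∀ x ∉ s, ContinuousAt q x)
    (heig : ∃ (lam : ℝ) (u : W22), InDomHa a q u ∧ (∃ x : ℝ, x ≠ 0 ∧ u.f x ≠ 0) ∧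
      (∀ᵐ x : ℝ, Ha q u x = (lam : ℂ) * u.f x)) :
    ∀ u v : W22, InDomHa a q u → InDomHa a q v →
      ip (Ha q u) v.f = ip u.f (Ha q v) := by
  obtain ⟨lam, w, hw, ⟨x0, hx0, hfx0⟩, hweig⟩ := heig
  intro u v hu hv
  by_cases ha : (starRingEnd ℂ) a = a
  · have hk := keyIdentity a hq u v hu hv
    rw [ha, sub_self, zero_mul] at hk
    exact sub_eq_zero.mp hk
  · exfalso
    have hww := keyIdentity a hq w w hw hw
    have hsame : ip (Ha q w) w.f = ip w.f (Ha q w) := by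
      unfold ip
      have e1 : (∫ x : ℝ, (starRingEnd ℂ) (Ha q w x) * w.f x)
          = ∫ x : ℝ, (starRingEnd ℂ) ((lam:ℂ) * w.f x) * w.f x :=
        integral_congr_ae (by filter_upwards [hweig] with x hx; rw [hx])
      have e2 : (∫ x : ℝ, (starRingEnd ℂ) (w.f x) * Ha q w x)
          = ∫ x : ℝ, (starRingEnd ℂ) (w.f x) * ((lam:ℂ) * w.f x) :=
        integral_congr_ae (by filter_upwards [hweig] with x hx; rw [hx])
      rw [e1, e2]
      congr 1
      funext x
      rw [map_mul, Complex.conj_ofReal]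
      ring
    rw [hsame, sub_self] at hww
    have hfr : w.fr = 0 := by
      have h1 := (mul_eq_zero.mp hww.symm).resolve_left (sub_ne_zero.mpr ha)
      rcases mul_eq_zero.mp h1 with h | h
      · have := congrArg (starRingEnd ℂ) h
        simpa using this
      · exact h
    have hfpfm : w.fp = w.fm := by
      have h1 := hw.1
      unfold W22.fs at h1
      exact sub_eq_zero.mp h1
    have hfp0 : w.fp = 0 := by
      have h2 : (w.fp + w.fm) / 2 = 0 := hfr
      rw [← hfpfm] at h2
      field_simp at h2
      linear_combination h2 / 2
    have hfm0 : w.fm = 0 := by rw [← hfpfm]; exact hfp0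
    have heq2 : ∀ᵐ x : ℝ, w.d2 x = -(lam:ℂ) * w.f x := by
      filter_upwards [hweig] with x hx
      unfold Ha at hx
      rw [hfr, zero_mul, add_zero] at hx
      linear_combination -hx
    have hwfp : Tendsto w.f (nhdsWithin 0 (Ioi 0)) (nhds 0) := by
      have := w.hfp; rwa [hfp0] at this
    have hwfm : Tendsto w.f (nhdsWithin 0 (Iio 0)) (nhds 0) := by
      have := w.hfm; rwa [hfm0] at this
    rcases lt_or_gt_of_ne hx0 with h | h
    · exact hfx0 (vanishIio w.hd1 w.hd2 w.l2f w.l2d1 w.l2d2 heq2 hwfm x0 h)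
    · exact hfx0 (vanishIoi w.hd1 w.hd2 w.l2f w.l2d1 w.l2d2 heq2 hwfp x0 h)
end

section
/- Let q be an even piecewise-continuous function supported in [−ρ,ρ], k ∈ ℝ\{0}, and u_λ the generalized eigenfunction given by (14). Then for |x| > ρ, u_λ(x) = β_k e^{ik|x|} where β_k = 1 − (1/k)∫₀^ρ sin(ks) q(s) ds; consequently u_λ ∈ L²(ℝ) if and only if β_k = 0. -/
open MeasureTheory Filter Set Complex

/-- for `q` even, piecewise continuous, supported in `[-ρ,ρ]`, and
`k ∈ ℝ\{0}`, the generalized eigenfunction `u_λ` satisfies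
`u_λ(x) = β_k e^{ik|x|}` for `|x| > ρ`, with `β_k = 1 - (1/k)∫₀^ρ sin(ks) q(s) ds`;
consequently `u_λ ∈ L²(ℝ)` iff `β_k = 0`. -/
theorem stmt14 (k ρ : ℝ) (hk : k ≠ 0) (hρ : 0 < ρ)
    (q : ℝ → ℂ) (hq : MemLp q 2 (volume : Measure ℝ))
    (hqpc : ∃ s : Finset ℝ, ∀ x ∉ s, ContinuousAt q x)
    (hqeven : ∀ x : ℝ, q (-x) = q x)
    (hsupp : ∀ x : ℝ, x ∉ Set.Icc (-ρ) ρ → q x = 0)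
    (A B C D u : ℝ → ℂ)
    (hA : ∀ x : ℝ, A x = 1 + Complex.I / (2 * k) * (∫ s in Set.Ioi (0 : ℝ),
            Complex.exp (Complex.I * k * s) * q s)
          - Complex.I / (2 * k) * (∫ s in (0 : ℝ)..x, Complex.exp (-(Complex.I * k * s)) * q s))
    (hB : ∀ x : ℝ, B x = -(Complex.I / (2 * k)) * ∫ s in Set.Ioi x,
            Complex.exp (Complex.I * k * s) * q s)
    (hC : ∀ x : ℝ, C x = -(Complex.I / (2 * k)) * ∫ s in Set.Iio x,
            Complex.exp (-(Complex.I * k * s)) * q s)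
    (hD : ∀ x : ℝ, D x = 1 + Complex.I / (2 * k) * (∫ s in Set.Iio (0 : ℝ),
            Complex.exp (-(Complex.I * k * s)) * q s)
          - Complex.I / (2 * k) * (∫ s in x..(0 : ℝ), Complex.exp (Complex.I * k * s) * q s))
    (hu : ∀ x : ℝ, u x = if 0 < x
            then A x * Complex.exp (Complex.I * k * x) + B x * Complex.exp (-(Complex.I * k * x))
            else C x * Complex.exp (Complex.I * k * x) + D x * Complex.exp (-(Complex.I * k * x)))
    (β : ℂ)
    (hβ : β = 1 - (1 / (k : ℂ)) * ∫ s in (0 : ℝ)..ρ, (Real.sin (k * s) : ℂ) * q s) :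
    (∀ x : ℝ, ρ < |x| → u x = β * Complex.exp (Complex.I * k * |x|)) ∧
    (MemLp u 2 (volume : Measure ℝ) ↔ β = 0) := by
  have hk' : (k : ℂ) ≠ 0 := Complex.ofReal_ne_zero.2 hk
  -- norm of the exponentials
  have hnp : ∀ x : ℝ, ‖Complex.exp (Complex.I * k * x)‖ = 1 := by
    intro x
    have : (Complex.I * k * x) = Complex.I * ((k * x : ℝ) : ℂ) := by push_cast; ring
    rw [this]; simp [Complex.norm_exp]
  have hnm : ∀ x : ℝ, ‖Complex.exp (-(Complex.I * k * x))‖ = 1 := by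
    intro x
    have : (-(Complex.I * k * x)) = Complex.I * ((-(k * x) : ℝ) : ℂ) := by push_cast; ring
    rw [this]; simp [Complex.norm_exp]
  -- integrability of q
  have hqint : Integrable q volume := by
    have hind : Set.indicator (Icc (-ρ) ρ) q = q :=
      Set.indicator_eq_self.2 (fun t ht => by_contra fun h => ht (hsupp t h))
    haveI : IsFiniteMeasure (volume.restrict (Icc (-ρ) ρ)) :=
      ⟨by rw [Measure.restrict_apply_univ]; exact measure_Icc_lt_top⟩
    have h2 : Integrable q (volume.restrict (Icc (-ρ) ρ)) :=
      memLp_one_iff_integrable.1 ((hq.restrict _).mono_exponent (by norm_num))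
    have := (integrable_indicator_iff measurableSet_Icc).2 h2
    rwa [hind] at this
  have hcim : Continuous (fun s : ℝ => Complex.I * k * (s : ℂ)) :=
    continuous_const.mul Complex.continuous_ofReal
  have hintp : Integrable (fun s : ℝ => Complex.exp (Complex.I * k * s) * q s) volume := by
    apply hqint.bdd_mul
    · exact (Continuous.cexp hcim).aestronglyMeasurable
    · exact ae_of_all _ fun x => le_of_eq (hnp x)
  have hintm : Integrable (fun s : ℝ => Complex.exp (-(Complex.I * k * s)) * q s) volume := by
    apply hqint.bdd_mul
    · exact (Continuous.cexp hcim.neg).aestronglyMeasurable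
    · exact ae_of_all _ fun x => le_of_eq (hnm x)
  -- integrals localize to [-ρ,ρ]
  have hres : ∀ (f : ℝ → ℂ), (∀ s ∉ Set.Icc (-ρ) ρ, f s = 0) → ∀ (S : Set ℝ),
      ∫ t in S, f t = ∫ t in S ∩ Icc (-ρ) ρ, f t := by
    intro f hf S
    rw [← setIntegral_indicator measurableSet_Icc]
    rw [Set.indicator_eq_self.2 (fun t ht => by_contra fun h => ht (hf t h))]
  have hzp : ∀ s ∉ Set.Icc (-ρ) ρ, Complex.exp (Complex.I * k * s) * q s = 0 :=
    fun s hs => by rw [hsupp s hs, mul_zero]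
  have hzm : ∀ s ∉ Set.Icc (-ρ) ρ, Complex.exp (-(Complex.I * k * s)) * q s = 0 :=
    fun s hs => by rw [hsupp s hs, mul_zero]
  have hs1 : Ioi (0:ℝ) ∩ Icc (-ρ) ρ = Ioc 0 ρ := by
    ext t
    simp only [mem_inter_iff, mem_Ioi, mem_Icc, mem_Ioc]
    constructor
    · rintro ⟨h1, _, h3⟩; exact ⟨h1, h3⟩
    · rintro ⟨h1, h2⟩; exact ⟨h1, by linarith, h2⟩
  have hs2 : ∀ x : ℝ, ρ ≤ x → Ioc (0:ℝ) x ∩ Icc (-ρ) ρ = Ioc 0 ρ := by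
    intro x hx
    ext t
    simp only [mem_inter_iff, mem_Ioc, mem_Icc]
    constructor
    · rintro ⟨⟨h1, _⟩, _, h4⟩; exact ⟨h1, h4⟩
    · rintro ⟨h1, h2⟩; exact ⟨⟨h1, by linarith⟩, by linarith, h2⟩
  have hIoi0 : (∫ s in Set.Ioi (0 : ℝ), Complex.exp (Complex.I * k * s) * q s)
      = ∫ s in (0:ℝ)..ρ, Complex.exp (Complex.I * k * s) * q s := by
    rw [hres _ hzp (Ioi 0), intervalIntegral.integral_of_le hρ.le, hs1]
  have hIval : ∀ x : ℝ, ρ ≤ x →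
      (∫ s in (0:ℝ)..x, Complex.exp (-(Complex.I * k * s)) * q s)
        = ∫ s in (0:ℝ)..ρ, Complex.exp (-(Complex.I * k * s)) * q s := by
    intro x hx
    rw [intervalIntegral.integral_of_le (hρ.le.trans hx), intervalIntegral.integral_of_le hρ.le,
      hres _ hzm (Ioc 0 x), hres _ hzm (Ioc 0 ρ), hs2 x hx, hs2 ρ le_rfl]
  -- pointwise identity producing sin
  have hpt : ∀ s : ℝ, Complex.I/(2*(k:ℂ)) * (Complex.exp (Complex.I*k*s) * q s)
      - Complex.I/(2*(k:ℂ)) * (Complex.exp (-(Complex.I*k*s)) * q s)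
      = -(1/(k:ℂ)) * ((Real.sin (k*s) : ℂ) * q s) := by
    intro s
    rw [show ((Real.sin (k*s) : ℝ) : ℂ) = Complex.sin ((k:ℂ)*(s:ℂ)) by
      push_cast [Complex.ofReal_sin]; ring_nf]
    rw [Complex.sin]
    have h1 : -(↑k * ↑s) * Complex.I = -(Complex.I * k * s) := by ring
    have h2 : (↑k * ↑s) * Complex.I = Complex.I * k * s := by ring
    rw [h1, h2]
    field_simp
    ring
  -- β in exponential form
  have hβρ : β = 1 + Complex.I/(2*(k:ℂ)) * (∫ s in (0:ℝ)..ρ, Complex.exp (Complex.I*k*s) * q s)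
      - Complex.I/(2*(k:ℂ)) * (∫ s in (0:ℝ)..ρ, Complex.exp (-(Complex.I*k*s)) * q s) := by
    have h1 : IntervalIntegrable
        (fun s : ℝ => Complex.I/(2*(k:ℂ)) * (Complex.exp (Complex.I*k*s) * q s)) volume 0 ρ :=
      (hintp.const_mul _).intervalIntegrable
    have h2 : IntervalIntegrable
        (fun s : ℝ => Complex.I/(2*(k:ℂ)) * (Complex.exp (-(Complex.I*k*s)) * q s)) volume 0 ρ :=
      (hintm.const_mul _).intervalIntegrable
    have key : Complex.I/(2*(k:ℂ)) * (∫ s in (0:ℝ)..ρ, Complex.exp (Complex.I*k*s) * q s)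
        - Complex.I/(2*(k:ℂ)) * (∫ s in (0:ℝ)..ρ, Complex.exp (-(Complex.I*k*s)) * q s)
        = -(1/(k:ℂ)) * ∫ s in (0:ℝ)..ρ, (Real.sin (k*s) : ℂ) * q s := by
      rw [← intervalIntegral.integral_const_mul, ← intervalIntegral.integral_const_mul,
        ← intervalIntegral.integral_sub h1 h2, ← intervalIntegral.integral_const_mul]
      exact intervalIntegral.integral_congr (fun s _ => hpt s)
    rw [hβ]
    calc (1 : ℂ) - (1/(k:ℂ)) * ∫ s in (0:ℝ)..ρ, (Real.sin (k*s) : ℂ) * q s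
        = 1 + (-(1/(k:ℂ)) * ∫ s in (0:ℝ)..ρ, (Real.sin (k*s) : ℂ) * q s) := by ring
      _ = 1 + (Complex.I/(2*(k:ℂ)) * (∫ s in (0:ℝ)..ρ, Complex.exp (Complex.I*k*s) * q s)
            - Complex.I/(2*(k:ℂ)) * (∫ s in (0:ℝ)..ρ, Complex.exp (-(Complex.I*k*s)) * q s)) := by
          rw [key]
      _ = _ := by ring
  -- Part 1
  have part1 : ∀ x : ℝ, ρ < |x| → u x = β * Complex.exp (Complex.I * k * |x|) := by
    intro x hx
    rcases lt_or_ge 0 x with hx0 | hx0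
    · have hxρ : ρ < x := by rwa [abs_of_pos hx0] at hx
      rw [abs_of_pos hx0, hu x, if_pos hx0]
      have hBx : B x = 0 := by
        rw [hB x, hres _ hzp (Ioi x)]
        have he : Ioi x ∩ Icc (-ρ) ρ = ∅ := by
          ext t
          simp only [mem_inter_iff, mem_Ioi, mem_Icc, mem_empty_iff_false, iff_false, not_and]
          intro h1 h2
          linarith
        rw [he]
        simp
      have hAx : A x = β := by
        rw [hA x, hIoi0, hIval x hxρ.le, hβρ]
      rw [hBx, hAx]
      ring
    · have hxρ : x < -ρ := by
        rw [abs_of_nonpos hx0] at hx; linarith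
      rw [abs_of_nonpos hx0, hu x, if_neg (not_lt.2 hx0)]
      have hCx : C x = 0 := by
        rw [hC x, hres _ hzm (Iio x)]
        have he : Iio x ∩ Icc (-ρ) ρ = ∅ := by
          ext t
          simp only [mem_inter_iff, mem_Iio, mem_Icc, mem_empty_iff_false, iff_false, not_and]
          intro h1 h2
          linarith
        rw [he]
        simp
      have hDx : D x = β := by
        rw [hD x]
        have hIio : (∫ s in Set.Iio (0:ℝ), Complex.exp (-(Complex.I * k * s)) * q s)
            = ∫ s in Set.Ioi (0:ℝ), Complex.exp (Complex.I * k * s) * q s := by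
          have hcn := integral_comp_neg_Ioi 0
            (fun s : ℝ => Complex.exp (-(Complex.I * k * s)) * q s)
          rw [neg_zero] at hcn
          rw [← MeasureTheory.integral_Iic_eq_integral_Iio, ← hcn]
          refine setIntegral_congr_fun measurableSet_Ioi (fun t _ => ?_)
          rw [hqeven]
          congr 1
          push_cast
          ring
        have hx0int : (∫ s in x..(0:ℝ), Complex.exp (Complex.I * k * s) * q s)
            = ∫ s in (0:ℝ)..ρ, Complex.exp (-(Complex.I * k * s)) * q s := by
          have hcomp : ∀ s : ℝ, Complex.exp (Complex.I * k * s) * q s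
              = (fun t : ℝ => Complex.exp (-(Complex.I * k * t)) * q t) (-s) := by
            intro s
            simp only
            rw [hqeven]
            congr 1
            push_cast
            ring
          calc (∫ s in x..(0:ℝ), Complex.exp (Complex.I * k * s) * q s)
              = ∫ s in x..(0:ℝ), (fun t : ℝ => Complex.exp (-(Complex.I * k * t)) * q t) (-s) :=
                intervalIntegral.integral_congr (fun s _ => hcomp s)
            _ = ∫ t in -(0:ℝ)..(-x), Complex.exp (-(Complex.I * k * t)) * q t := by
                exact intervalIntegral.integral_comp_neg
                  (fun t : ℝ => Complex.exp (-(Complex.I * k * t)) * q t)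
            _ = ∫ t in (0:ℝ)..(-x), Complex.exp (-(Complex.I * k * t)) * q t := by rw [neg_zero]
            _ = _ := hIval (-x) (by linarith)
        rw [hIio, hx0int, hIoi0, hβρ]
      rw [hCx, hDx, zero_mul, zero_add]
      congr 2
      push_cast
      ring
  refine ⟨part1, ?_, ?_⟩
  · -- Memℒp → β = 0
    intro h
    by_contra hβ0
    have h2 := (h.restrict (Ioi ρ)).2
    have heq : eLpNorm u 2 (volume.restrict (Ioi ρ))
        = eLpNorm (fun _ : ℝ => β) 2 (volume.restrict (Ioi ρ)) := by
      apply eLpNorm_congr_norm_ae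
      refine (ae_restrict_iff' measurableSet_Ioi).2 (ae_of_all _ fun x hx => ?_)
      have hx' : ρ < |x| := by rw [abs_of_pos (hρ.trans hx)]; exact hx
      rw [part1 x hx', norm_mul, hnp |x|, mul_one]
    have hne : volume.restrict (Ioi ρ) ≠ 0 := by
      rw [Ne, Measure.restrict_eq_zero, Real.volume_Ioi]
      simp
    rw [heq, eLpNorm_const β (by norm_num) hne] at h2
    have huniv : (volume.restrict (Ioi ρ)) Set.univ = ⊤ := by
      rw [Measure.restrict_apply_univ, Real.volume_Ioi]
    rw [huniv] at h2
    have htop : (⊤ : ENNReal) ^ (1 / (2 : ENNReal).toReal) = ⊤ := by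
      rw [ENNReal.top_rpow_of_pos]
      norm_num
    rw [htop, ENNReal.mul_top (by simpa using hβ0)] at h2
    exact lt_irrefl _ h2
  · -- β = 0 → Memℒp
    intro hβ0
    -- measurability of u
    have hprimp : Continuous (fun x : ℝ => ∫ s in (0:ℝ)..x, Complex.exp (Complex.I*k*s) * q s) :=
      intervalIntegral.continuous_primitive (fun a b => hintp.intervalIntegrable) 0
    have hprimm : Continuous (fun x : ℝ => ∫ s in (0:ℝ)..x, Complex.exp (-(Complex.I*k*s)) * q s) :=
      intervalIntegral.continuous_primitive (fun a b => hintm.intervalIntegrable) 0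
    have hAcont : Continuous A := by
      have : A = fun x => (1 + Complex.I / (2 * k) * (∫ s in Set.Ioi (0 : ℝ),
            Complex.exp (Complex.I * k * s) * q s))
          - Complex.I / (2 * k) * (∫ s in (0 : ℝ)..x, Complex.exp (-(Complex.I * k * s)) * q s) :=
        funext fun x => by rw [hA x]
      rw [this]
      exact continuous_const.sub (continuous_const.mul hprimm)
    have hIoiEq : ∀ x : ℝ, (∫ s in Set.Ioi x, Complex.exp (Complex.I*k*s) * q s)
        = (∫ s : ℝ, Complex.exp (Complex.I*k*s) * q s)
          - (∫ s in Set.Iic (0:ℝ), Complex.exp (Complex.I*k*s) * q s)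
          - ∫ s in (0:ℝ)..x, Complex.exp (Complex.I*k*s) * q s := by
      intro x
      have h1 := integral_add_compl (measurableSet_Iic (a := x)) hintp
      rw [compl_Iic] at h1
      have h2 := intervalIntegral.integral_Iic_sub_Iic
        (hintp.integrableOn (s := Iic (0:ℝ))) (hintp.integrableOn (s := Iic x))
      linear_combination h1 - h2
    have hBcont : Continuous B := by
      have : B = fun x => -(Complex.I / (2 * k)) *
          ((∫ s : ℝ, Complex.exp (Complex.I*k*s) * q s)
          - (∫ s in Set.Iic (0:ℝ), Complex.exp (Complex.I*k*s) * q s)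
          - ∫ s in (0:ℝ)..x, Complex.exp (Complex.I*k*s) * q s) :=
        funext fun x => by rw [hB x, hIoiEq x]
      rw [this]
      exact continuous_const.mul (continuous_const.sub hprimp)
    have hIioEq : ∀ x : ℝ, (∫ s in Set.Iio x, Complex.exp (-(Complex.I*k*s)) * q s)
        = (∫ s in Set.Iic (0:ℝ), Complex.exp (-(Complex.I*k*s)) * q s)
          + ∫ s in (0:ℝ)..x, Complex.exp (-(Complex.I*k*s)) * q s := by
      intro x
      rw [← MeasureTheory.integral_Iic_eq_integral_Iio]
      have h2 := intervalIntegral.integral_Iic_sub_Iic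
        (hintm.integrableOn (s := Iic (0:ℝ))) (hintm.integrableOn (s := Iic x))
      linear_combination h2
    have hCcont : Continuous C := by
      have : C = fun x => -(Complex.I / (2 * k)) *
          ((∫ s in Set.Iic (0:ℝ), Complex.exp (-(Complex.I*k*s)) * q s)
          + ∫ s in (0:ℝ)..x, Complex.exp (-(Complex.I*k*s)) * q s) :=
        funext fun x => by rw [hC x, hIioEq x]
      rw [this]
      exact continuous_const.mul (continuous_const.add hprimm)
    have hDcont : Continuous D := by
      have : D = fun x => (1 + Complex.I / (2 * k) * (∫ s in Set.Iio (0 : ℝ),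
            Complex.exp (-(Complex.I * k * s)) * q s))
          - Complex.I / (2 * k) * (-(∫ s in (0:ℝ)..x, Complex.exp (Complex.I * k * s) * q s)) :=
        funext fun x => by rw [hD x, intervalIntegral.integral_symm]
      rw [this]
      exact continuous_const.sub (continuous_const.mul hprimp.neg)
    have hecontp : Continuous (fun x : ℝ => Complex.exp (Complex.I * k * x)) :=
      Continuous.cexp hcim
    have hecontm : Continuous (fun x : ℝ => Complex.exp (-(Complex.I * k * x))) :=
      Continuous.cexp hcim.neg
    have humeas : AEStronglyMeasurable u volume := by
      have hueq : u = fun x => if 0 < x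
          then A x * Complex.exp (Complex.I * k * x) + B x * Complex.exp (-(Complex.I * k * x))
          else C x * Complex.exp (Complex.I * k * x) + D x * Complex.exp (-(Complex.I * k * x)) :=
        funext hu
      rw [hueq]
      exact (Measurable.ite measurableSet_Ioi
        ((hAcont.mul hecontp).add (hBcont.mul hecontm)).measurable
        ((hCcont.mul hecontp).add (hDcont.mul hecontm)).measurable).aestronglyMeasurable
    -- bound
    set M : ℝ := ∫ t : ℝ, ‖q t‖ with hM
    have hM0 : 0 ≤ M := integral_nonneg fun t => norm_nonneg _
    set cn : ℝ := ‖(Complex.I / (2 * k) : ℂ)‖ with hcn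
    have hcn0 : 0 ≤ cn := norm_nonneg _
    have hSle : ∀ (S : Set ℝ) (g : ℝ → ℂ), (∀ s, ‖g s‖ = ‖q s‖) → ‖∫ s in S, g s‖ ≤ M := by
      intro S g hg
      calc ‖∫ s in S, g s‖ ≤ ∫ s in S, ‖g s‖ := norm_integral_le_integral_norm _
        _ = ∫ s in S, ‖q s‖ := by simp only [hg]
        _ ≤ M := integral_mono_measure Measure.restrict_le_self
            (ae_of_all _ fun t => norm_nonneg _) hqint.norm
    have hIle : ∀ (a b : ℝ), a ≤ b → ∀ (g : ℝ → ℂ), (∀ s, ‖g s‖ = ‖q s‖) →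
        ‖∫ s in a..b, g s‖ ≤ M := by
      intro a b hab g hg
      rw [intervalIntegral.integral_of_le hab]
      exact hSle _ g hg
    have hgnp : ∀ s : ℝ, ‖Complex.exp (Complex.I * k * s) * q s‖ = ‖q s‖ :=
      fun s => by rw [norm_mul, hnp, one_mul]
    have hgnm : ∀ s : ℝ, ‖Complex.exp (-(Complex.I * k * s)) * q s‖ = ‖q s‖ :=
      fun s => by rw [norm_mul, hnm, one_mul]
    have hub : ∀ x : ℝ, ‖u x‖ ≤ 1 + cn * M + cn * M + cn * M := by
      intro x
      rw [hu x]
      split_ifs with hx0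
      · have hAb : ‖A x‖ ≤ 1 + cn * M + cn * M := by
          rw [hA x]
          calc ‖1 + Complex.I / (2 * ↑k) * (∫ s in Set.Ioi (0 : ℝ),
                Complex.exp (Complex.I * k * s) * q s)
              - Complex.I / (2 * ↑k) * (∫ s in (0 : ℝ)..x,
                Complex.exp (-(Complex.I * k * s)) * q s)‖
              ≤ ‖1 + Complex.I / (2 * ↑k) * (∫ s in Set.Ioi (0 : ℝ),
                Complex.exp (Complex.I * k * s) * q s)‖
              + ‖Complex.I / (2 * ↑k) * (∫ s in (0 : ℝ)..x,
                Complex.exp (-(Complex.I * k * s)) * q s)‖ := norm_sub_le _ _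
            _ ≤ (‖(1:ℂ)‖ + ‖Complex.I / (2 * ↑k) * (∫ s in Set.Ioi (0 : ℝ),
                Complex.exp (Complex.I * k * s) * q s)‖)
              + ‖Complex.I / (2 * ↑k) * (∫ s in (0 : ℝ)..x,
                Complex.exp (-(Complex.I * k * s)) * q s)‖ :=
                add_le_add (norm_add_le _ _) le_rfl
            _ ≤ 1 + cn * M + cn * M := by
                rw [norm_one, norm_mul, norm_mul]
                have hb1 := hSle (Set.Ioi (0:ℝ)) _ hgnp
                have hb2 := hIle 0 x hx0.le _ hgnm
                exact add_le_add (add_le_add le_rfl (mul_le_mul_of_nonneg_left hb1 hcn0))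
                  (mul_le_mul_of_nonneg_left hb2 hcn0)
        have hBb : ‖B x‖ ≤ cn * M := by
          rw [hB x, norm_mul, norm_neg]
          exact mul_le_mul_of_nonneg_left (hSle (Set.Ioi x) _ hgnp) hcn0
        calc ‖A x * Complex.exp (Complex.I * k * x)
              + B x * Complex.exp (-(Complex.I * k * x))‖
            ≤ ‖A x * Complex.exp (Complex.I * k * x)‖
              + ‖B x * Complex.exp (-(Complex.I * k * x))‖ := norm_add_le _ _
          _ = ‖A x‖ + ‖B x‖ := by rw [norm_mul, norm_mul, hnp x, hnm x, mul_one, mul_one]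
          _ ≤ (1 + cn * M + cn * M) + cn * M := add_le_add hAb hBb
      · have hx0' : x ≤ 0 := not_lt.1 hx0
        have hDb : ‖D x‖ ≤ 1 + cn * M + cn * M := by
          rw [hD x]
          calc ‖1 + Complex.I / (2 * ↑k) * (∫ s in Set.Iio (0 : ℝ),
                Complex.exp (-(Complex.I * k * s)) * q s)
              - Complex.I / (2 * ↑k) * (∫ s in x..(0:ℝ),
                Complex.exp (Complex.I * k * s) * q s)‖
              ≤ ‖1 + Complex.I / (2 * ↑k) * (∫ s in Set.Iio (0 : ℝ),
                Complex.exp (-(Complex.I * k * s)) * q s)‖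
              + ‖Complex.I / (2 * ↑k) * (∫ s in x..(0:ℝ),
                Complex.exp (Complex.I * k * s) * q s)‖ := norm_sub_le _ _
            _ ≤ (‖(1:ℂ)‖ + ‖Complex.I / (2 * ↑k) * (∫ s in Set.Iio (0 : ℝ),
                Complex.exp (-(Complex.I * k * s)) * q s)‖)
              + ‖Complex.I / (2 * ↑k) * (∫ s in x..(0:ℝ),
                Complex.exp (Complex.I * k * s) * q s)‖ :=
                add_le_add (norm_add_le _ _) le_rfl
            _ ≤ 1 + cn * M + cn * M := by
                rw [norm_one, norm_mul, norm_mul]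
                have hb1 := hSle (Set.Iio (0:ℝ)) _ hgnm
                have hb2 := hIle x 0 hx0' _ hgnp
                exact add_le_add (add_le_add le_rfl (mul_le_mul_of_nonneg_left hb1 hcn0))
                  (mul_le_mul_of_nonneg_left hb2 hcn0)
        have hCb : ‖C x‖ ≤ cn * M := by
          rw [hC x, norm_mul, norm_neg]
          exact mul_le_mul_of_nonneg_left (hSle (Set.Iio x) _ hgnm) hcn0
        calc ‖C x * Complex.exp (Complex.I * k * x)
              + D x * Complex.exp (-(Complex.I * k * x))‖
            ≤ ‖C x * Complex.exp (Complex.I * k * x)‖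
              + ‖D x * Complex.exp (-(Complex.I * k * x))‖ := norm_add_le _ _
          _ = ‖C x‖ + ‖D x‖ := by rw [norm_mul, norm_mul, hnp x, hnm x, mul_one, mul_one]
          _ ≤ cn * M + (1 + cn * M + cn * M) := add_le_add hCb hDb
          _ = 1 + cn * M + cn * M + cn * M := by ring
    -- u vanishes outside [-ρ,ρ]
    have habs : ∀ x : ℝ, x ∉ Icc (-ρ) ρ → ρ < |x| := by
      intro x hx
      rw [Set.mem_Icc, not_and_or, not_le, not_le] at hx
      rcases hx with h | h
      · exact lt_abs.2 (Or.inr (by linarith))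
      · exact lt_abs.2 (Or.inl h)
    have hzero : ∀ x : ℝ, x ∉ Icc (-ρ) ρ → u x = 0 := by
      intro x hx
      rw [part1 x (habs x hx), hβ0, zero_mul]
    have hind : u = Set.indicator (Icc (-ρ) ρ) u := by
      funext x
      by_cases hx : x ∈ Icc (-ρ) ρ
      · rw [Set.indicator_of_mem hx]
      · rw [Set.indicator_of_notMem hx, hzero x hx]
    rw [hind, memLp_indicator_iff_restrict measurableSet_Icc]
    haveI : IsFiniteMeasure (volume.restrict (Icc (-ρ) ρ)) :=
      ⟨by rw [Measure.restrict_apply_univ]; exact measure_Icc_lt_top⟩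
    exact MemLp.of_bound (humeas.restrict) _ (ae_of_all _ hub)
end

section
/- Let q(x) = Z·χ_{[−ρ,ρ]}(x) with Z ∈ ℝ, ρ > 0, and suppose k₀ ∈ ℝ\{0} solves Z(1 − cos(k₀ρ)) = k₀². Then the function u(x) = (Z/k₀²)(1 − cos(k₀(ρ−|x|)))·χ_{[−ρ,ρ]}(x) is continuous on ℝ, lies in W²₂(ℝ\{0}), and satisfies −u'' + u(0)q(x) = k₀² u(x) for x ∉ {0, ±ρ}, together with u'(0+) − u'(0−) = a u(0) + Z∫_{−ρ}^{ρ} u(x) dx where a = (Z²/k₀²)(sin(2k₀ρ)/k₀ − 2ρ). -/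
open MeasureTheory Filter Set

private lemma cos_aff_deriv (a b x : ℝ) :
    HasDerivAt (fun y : ℝ => Real.cos (a + b * y)) (-(b * Real.sin (a + b * x))) x := by
  have h1 : HasDerivAt (fun y : ℝ => a + b * y) b x := by
    simpa using ((hasDerivAt_id x).const_mul b).const_add a
  have h2 := (Real.hasDerivAt_cos (a + b * x)).comp x h1
  refine h2.congr_deriv ?_; ring

private lemma sin_aff_deriv (a b x : ℝ) :
    HasDerivAt (fun y : ℝ => Real.sin (a + b * y)) (b * Real.cos (a + b * x)) x := by
  have h1 : HasDerivAt (fun y : ℝ => a + b * y) b x := by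
    simpa using ((hasDerivAt_id x).const_mul b).const_add a
  have h2 := (Real.hasDerivAt_sin (a + b * x)).comp x h1
  refine h2.congr_deriv ?_; ring

theorem stmt15 (Z ρ k₀ : ℝ) (hρ : 0 < ρ) (hk₀ : k₀ ≠ 0)
    (hchar : Z * (1 - Real.cos (k₀ * ρ)) = k₀ ^ 2)
    (q : ℝ → ℝ) (hq : ∀ x : ℝ, q x = if x ∈ Set.Icc (-ρ) ρ then Z else 0)
    (u : ℝ → ℝ)
    (hu : ∀ x : ℝ, u x = if x ∈ Set.Icc (-ρ) ρ
            then Z / k₀ ^ 2 * (1 - Real.cos (k₀ * (ρ - |x|))) else 0)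
    (a : ℝ) (ha : a = Z ^ 2 / k₀ ^ 2 * (Real.sin (2 * k₀ * ρ) / k₀ - 2 * ρ)) :
    Continuous u ∧ MemLp u 2 (volume : Measure ℝ) ∧
    ∃ u' u'' : ℝ → ℝ,
      (∀ x : ℝ, x ∉ ({0, ρ, -ρ} : Set ℝ) → HasDerivAt u (u' x) x) ∧
      (∀ x : ℝ, x ∉ ({0, ρ, -ρ} : Set ℝ) → HasDerivAt u' (u'' x) x) ∧
      (∀ x : ℝ, x ∉ ({0, ρ, -ρ} : Set ℝ) → -u'' x + u 0 * q x = k₀ ^ 2 * u x) ∧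
      ∃ Lp Lm : ℝ,
        Tendsto u' (nhdsWithin 0 (Set.Ioi 0)) (nhds Lp) ∧
        Tendsto u' (nhdsWithin 0 (Set.Iio 0)) (nhds Lm) ∧
        Lp - Lm = a * u 0 + Z * ∫ x in (-ρ)..ρ, u x := by
  have hk2 : k₀ ^ 2 ≠ 0 := pow_ne_zero 2 hk₀
  set C : ℝ := Z / k₀ ^ 2 with hC
  -- value at 0
  have hmem0 : (0 : ℝ) ∈ Icc (-ρ) ρ := ⟨by linarith, by linarith⟩
  have hu0 : u 0 = 1 := by
    rw [hu 0, if_pos hmem0, abs_zero, sub_zero, hC]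
    field_simp
    linarith [hchar]
  -- continuity
  have hueq : u = fun x => if x ∈ Icc (-ρ) ρ
      then Z / k₀ ^ 2 * (1 - Real.cos (k₀ * (ρ - |x|))) else 0 := funext hu
  have hcont : Continuous u := by
    rw [hueq]
    apply Continuous.if
    · intro x hx
      have : frontier {x : ℝ | x ∈ Icc (-ρ) ρ} = {-ρ, ρ} := by
        exact frontier_Icc (show (-ρ : ℝ) ≤ ρ by linarith)
      rw [this] at hx
      rcases hx with h | h <;> subst h <;>
        simp [abs_of_nonneg hρ.le, abs_of_nonpos (neg_nonpos.mpr hρ.le)]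
    · fun_prop
    · exact continuous_const
  refine ⟨hcont, ?_, ?_⟩
  · -- Memℒp
    have hsupp : HasCompactSupport u := by
      apply HasCompactSupport.intro (isCompact_Icc (a := -ρ) (b := ρ))
      intro x hx
      rw [hu x, if_neg hx]
    exact hcont.memLp_of_hasCompactSupport hsupp
  -- derivatives
  set u' : ℝ → ℝ := fun x =>
    if x ∈ Ioo 0 ρ then -(C * k₀ * Real.sin (k₀ * (ρ - x)))
    else if x ∈ Ioo (-ρ) 0 then C * k₀ * Real.sin (k₀ * (ρ + x)) else 0 with hu'
  set u'' : ℝ → ℝ := fun x =>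
    if x ∈ Ioo 0 ρ then C * k₀ ^ 2 * Real.cos (k₀ * (ρ - x))
    else if x ∈ Ioo (-ρ) 0 then C * k₀ ^ 2 * Real.cos (k₀ * (ρ + x)) else 0 with hu''
  refine ⟨u', u'', ?_, ?_, ?_, ?_⟩
  · -- first derivative
    intro x hx
    simp only [mem_insert_iff, mem_singleton_iff, not_or] at hx
    obtain ⟨hx0, hxρ, hxmρ⟩ := hx
    rcases lt_trichotomy x 0 with hneg | h0 | hpos
    · rcases lt_trichotomy x (-ρ) with hlt | heq | hgt
      · -- x < -ρ : u = 0 near x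
        have hev : u =ᶠ[nhds x] fun _ => 0 := by
          filter_upwards [Iio_mem_nhds hlt] with y (hy : y < -ρ)
          rw [hu y, if_neg]
          intro hy'; linarith [hy'.1]
        have : u' x = 0 := by
          rw [hu']; simp only
          rw [if_neg, if_neg]
          · rintro ⟨h1, _⟩; linarith
          · rintro ⟨h1, _⟩; linarith
        rw [this]
        exact (hasDerivAt_const x (0 : ℝ)).congr_of_eventuallyEq hev
      · exact absurd heq hxmρ
      · -- x ∈ Ioo (-ρ) 0
        have hxI : x ∈ Ioo (-ρ) 0 := ⟨hgt, hneg⟩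
        have hev : u =ᶠ[nhds x]
            fun y => C * (1 - Real.cos (k₀ * ρ + k₀ * y)) := by
          filter_upwards [Ioo_mem_nhds hgt hneg] with y hy
          rw [hu y, if_pos ⟨hy.1.le, by linarith [hy.2]⟩, abs_of_neg hy.2]
          ring_nf
        have hd : HasDerivAt (fun y => C * (1 - Real.cos (k₀ * ρ + k₀ * y)))
            (C * k₀ * Real.sin (k₀ * (ρ + x))) x := by
          have := ((hasDerivAt_const x (1:ℝ)).sub (cos_aff_deriv (k₀ * ρ) k₀ x)).const_mul C
          refine this.congr_deriv ?_
          rw [show k₀ * (ρ + x) = k₀ * ρ + k₀ * x by ring]; ring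
        have hval : u' x = C * k₀ * Real.sin (k₀ * (ρ + x)) := by
          rw [hu']; simp only
          rw [if_neg (by rintro ⟨h1, _⟩; linarith), if_pos hxI]
        rw [hval]
        exact hd.congr_of_eventuallyEq hev
    · exact absurd h0 hx0
    · rcases lt_trichotomy x ρ with hlt | heq | hgt
      · -- x ∈ Ioo 0 ρ
        have hxI : x ∈ Ioo 0 ρ := ⟨hpos, hlt⟩
        have hev : u =ᶠ[nhds x]
            fun y => C * (1 - Real.cos (k₀ * ρ + (-k₀) * y)) := by
          filter_upwards [Ioo_mem_nhds hpos hlt] with y hy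
          rw [hu y, if_pos ⟨by linarith [hy.1], hy.2.le⟩, abs_of_pos hy.1]
          ring_nf
        have hd : HasDerivAt (fun y => C * (1 - Real.cos (k₀ * ρ + (-k₀) * y)))
            (-(C * k₀ * Real.sin (k₀ * (ρ - x)))) x := by
          have := ((hasDerivAt_const x (1:ℝ)).sub (cos_aff_deriv (k₀ * ρ) (-k₀) x)).const_mul C
          refine this.congr_deriv ?_
          rw [show k₀ * (ρ - x) = k₀ * ρ + (-k₀) * x by ring]; ring
        have hval : u' x = -(C * k₀ * Real.sin (k₀ * (ρ - x))) := by
          rw [hu']; simp only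
          rw [if_pos hxI]
        rw [hval]
        exact hd.congr_of_eventuallyEq hev
      · exact absurd heq hxρ
      · -- x > ρ
        have hev : u =ᶠ[nhds x] fun _ => 0 := by
          filter_upwards [Ioi_mem_nhds hgt] with y (hy : ρ < y)
          rw [hu y, if_neg]
          intro hy'; linarith [hy'.2]
        have : u' x = 0 := by
          rw [hu']; simp only
          rw [if_neg, if_neg]
          · rintro ⟨_, h2⟩; linarith
          · rintro ⟨_, h2⟩; linarith
        rw [this]
        exact (hasDerivAt_const x (0 : ℝ)).congr_of_eventuallyEq hev
  · -- second derivative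
    intro x hx
    simp only [mem_insert_iff, mem_singleton_iff, not_or] at hx
    obtain ⟨hx0, hxρ, hxmρ⟩ := hx
    rcases lt_trichotomy x 0 with hneg | h0 | hpos
    · rcases lt_trichotomy x (-ρ) with hlt | heq | hgt
      · have hev : u' =ᶠ[nhds x] fun _ => 0 := by
          filter_upwards [Iio_mem_nhds hlt] with y (hy : y < -ρ)
          rw [hu']; simp only
          rw [if_neg (by rintro ⟨h1, _⟩; linarith), if_neg (by rintro ⟨h1, _⟩; linarith)]
        have : u'' x = 0 := by
          rw [hu'']; simp only
          rw [if_neg (by rintro ⟨h1, _⟩; linarith), if_neg (by rintro ⟨h1, _⟩; linarith)]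
        rw [this]
        exact (hasDerivAt_const x (0 : ℝ)).congr_of_eventuallyEq hev
      · exact absurd heq hxmρ
      · have hxI : x ∈ Ioo (-ρ) 0 := ⟨hgt, hneg⟩
        have hev : u' =ᶠ[nhds x]
            fun y => C * k₀ * Real.sin (k₀ * ρ + k₀ * y) := by
          filter_upwards [Ioo_mem_nhds hgt hneg] with y hy
          rw [hu']; simp only
          rw [if_neg (by rintro ⟨h1, _⟩; linarith [hy.2]), if_pos hy]
          ring_nf
        have hd : HasDerivAt (fun y => C * k₀ * Real.sin (k₀ * ρ + k₀ * y))
            (C * k₀ ^ 2 * Real.cos (k₀ * (ρ + x))) x := by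
          have := (sin_aff_deriv (k₀ * ρ) k₀ x).const_mul (C * k₀)
          refine this.congr_deriv ?_
          rw [show k₀ * (ρ + x) = k₀ * ρ + k₀ * x by ring]; ring
        have hval : u'' x = C * k₀ ^ 2 * Real.cos (k₀ * (ρ + x)) := by
          rw [hu'']; simp only
          rw [if_neg (by rintro ⟨h1, _⟩; linarith), if_pos hxI]
        rw [hval]
        exact hd.congr_of_eventuallyEq hev
    · exact absurd h0 hx0
    · rcases lt_trichotomy x ρ with hlt | heq | hgt
      · have hxI : x ∈ Ioo 0 ρ := ⟨hpos, hlt⟩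
        have hev : u' =ᶠ[nhds x]
            fun y => -(C * k₀) * Real.sin (k₀ * ρ + (-k₀) * y) := by
          filter_upwards [Ioo_mem_nhds hpos hlt] with y hy
          rw [hu']; simp only
          rw [if_pos hy]
          ring_nf
        have hd : HasDerivAt (fun y => -(C * k₀) * Real.sin (k₀ * ρ + (-k₀) * y))
            (C * k₀ ^ 2 * Real.cos (k₀ * (ρ - x))) x := by
          have := (sin_aff_deriv (k₀ * ρ) (-k₀) x).const_mul (-(C * k₀))
          refine this.congr_deriv ?_
          rw [show k₀ * (ρ - x) = k₀ * ρ + (-k₀) * x by ring]; ring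
        have hval : u'' x = C * k₀ ^ 2 * Real.cos (k₀ * (ρ - x)) := by
          rw [hu'']; simp only
          rw [if_pos hxI]
        rw [hval]
        exact hd.congr_of_eventuallyEq hev
      · exact absurd heq hxρ
      · have hev : u' =ᶠ[nhds x] fun _ => 0 := by
          filter_upwards [Ioi_mem_nhds hgt] with y (hy : ρ < y)
          rw [hu']; simp only
          rw [if_neg (by rintro ⟨_, h2⟩; linarith), if_neg (by rintro ⟨_, h2⟩; linarith)]
        have : u'' x = 0 := by
          rw [hu'']; simp only
          rw [if_neg (by rintro ⟨_, h2⟩; linarith), if_neg (by rintro ⟨_, h2⟩; linarith)]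
        rw [this]
        exact (hasDerivAt_const x (0 : ℝ)).congr_of_eventuallyEq hev
  · -- ODE
    intro x hx
    simp only [mem_insert_iff, mem_singleton_iff, not_or] at hx
    obtain ⟨hx0, hxρ, hxmρ⟩ := hx
    rcases lt_trichotomy x 0 with hneg | h0 | hpos
    · rcases lt_trichotomy x (-ρ) with hlt | heq | hgt
      · have h1 : u'' x = 0 := by
          rw [hu'']; simp only
          rw [if_neg (by rintro ⟨h1, _⟩; linarith), if_neg (by rintro ⟨h1, _⟩; linarith)]
        have h2 : q x = 0 := by
          rw [hq x, if_neg]; intro hy'; exact absurd hy'.1 (by linarith)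
        have h3 : u x = 0 := by
          rw [hu x, if_neg]; intro hy'; exact absurd hy'.1 (by linarith)
        rw [h1, h2, h3]; ring
      · exact absurd heq hxmρ
      · have hxI : x ∈ Ioo (-ρ) 0 := ⟨hgt, hneg⟩
        have h1 : u'' x = C * k₀ ^ 2 * Real.cos (k₀ * (ρ + x)) := by
          rw [hu'']; simp only
          rw [if_neg (by rintro ⟨h1, _⟩; linarith), if_pos hxI]
        have h2 : q x = Z := by
          rw [hq x, if_pos ⟨hgt.le, by linarith⟩]
        have h3 : u x = C * (1 - Real.cos (k₀ * (ρ + x))) := by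
          rw [hu x, if_pos ⟨hgt.le, by linarith⟩, abs_of_neg hneg]
          ring_nf
        rw [h1, h2, h3, hu0, hC]
        field_simp
        ring
    · exact absurd h0 hx0
    · rcases lt_trichotomy x ρ with hlt | heq | hgt
      · have hxI : x ∈ Ioo 0 ρ := ⟨hpos, hlt⟩
        have h1 : u'' x = C * k₀ ^ 2 * Real.cos (k₀ * (ρ - x)) := by
          rw [hu'']; simp only; rw [if_pos hxI]
        have h2 : q x = Z := by
          rw [hq x, if_pos ⟨by linarith, hlt.le⟩]
        have h3 : u x = C * (1 - Real.cos (k₀ * (ρ - x))) := by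
          rw [hu x, if_pos ⟨by linarith, hlt.le⟩, abs_of_pos hpos]
        rw [h1, h2, h3, hu0, hC]
        field_simp
        ring
      · exact absurd heq hxρ
      · have h1 : u'' x = 0 := by
          rw [hu'']; simp only
          rw [if_neg (by rintro ⟨_, h2⟩; linarith), if_neg (by rintro ⟨_, h2⟩; linarith)]
        have h2 : q x = 0 := by
          rw [hq x, if_neg]; intro hy'; exact absurd hy'.2 (by linarith)
        have h3 : u x = 0 := by
          rw [hu x, if_neg]; intro hy'; exact absurd hy'.2 (by linarith)
        rw [h1, h2, h3]; ring
  · -- jump condition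
    refine ⟨-(C * k₀ * Real.sin (k₀ * ρ)), C * k₀ * Real.sin (k₀ * ρ), ?_, ?_, ?_⟩
    · -- limit from the right
      have hev : u' =ᶠ[nhdsWithin 0 (Ioi 0)]
          fun y => -(C * k₀ * Real.sin (k₀ * (ρ - y))) := by
        filter_upwards [Ioo_mem_nhdsGT_of_mem (by constructor <;> simp [hρ] : (0:ℝ) ∈ Ico 0 ρ)] with y hy
        rw [hu']; simp only
        rw [if_pos hy]
      have hc : Tendsto (fun y => -(C * k₀ * Real.sin (k₀ * (ρ - y))))
          (nhdsWithin 0 (Ioi 0)) (nhds (-(C * k₀ * Real.sin (k₀ * ρ)))) := by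
        have : ContinuousAt (fun y : ℝ => -(C * k₀ * Real.sin (k₀ * (ρ - y)))) 0 := by
          fun_prop
        have := this.tendsto
        simp only [sub_zero] at this
        exact this.mono_left nhdsWithin_le_nhds
      exact hc.congr' hev.symm
    · -- limit from the left
      have hev : u' =ᶠ[nhdsWithin 0 (Iio 0)]
          fun y => C * k₀ * Real.sin (k₀ * (ρ + y)) := by
        filter_upwards [Ioo_mem_nhdsLT_of_mem (by constructor <;> simp [hρ] : (0:ℝ) ∈ Ioc (-ρ) 0)] with y hy
        rw [hu']; simp only
        rw [if_neg (by rintro ⟨h1, _⟩; linarith [hy.2]), if_pos hy]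
      have hc : Tendsto (fun y => C * k₀ * Real.sin (k₀ * (ρ + y)))
          (nhdsWithin 0 (Iio 0)) (nhds (C * k₀ * Real.sin (k₀ * ρ))) := by
        have : ContinuousAt (fun y : ℝ => C * k₀ * Real.sin (k₀ * (ρ + y))) 0 := by
          fun_prop
        have := this.tendsto
        simp only [add_zero] at this
        exact this.mono_left nhdsWithin_le_nhds
      exact hc.congr' hev.symm
    · -- the jump identity
      have hint : (∫ x in (-ρ)..ρ, u x) = 2 * C * (ρ - Real.sin (k₀ * ρ) / k₀) := by
        have hiu : ∀ c d : ℝ, IntervalIntegrable u volume c d :=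
          fun c d => hcont.intervalIntegrable c d
        have hsplit : (∫ x in (-ρ)..ρ, u x)
            = (∫ x in (-ρ)..(0:ℝ), u x) + ∫ x in (0:ℝ)..ρ, u x :=
          (intervalIntegral.integral_add_adjacent_intervals (hiu _ _) (hiu _ _)).symm
        have hright : (∫ x in (0:ℝ)..ρ, u x) = C * (ρ - Real.sin (k₀ * ρ) / k₀) := by
          have hF : ∀ x ∈ uIcc (0:ℝ) ρ,
              HasDerivAt (fun y => C * (y + Real.sin (k₀ * ρ + (-k₀) * y) / k₀)) (u x) x := by
            intro x hx
            rw [uIcc_of_le hρ.le] at hx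
            have hd : HasDerivAt (fun y => C * (y + Real.sin (k₀ * ρ + (-k₀) * y) / k₀))
                (C * (1 - Real.cos (k₀ * ρ + (-k₀) * x))) x := by
              have h1 := ((hasDerivAt_id x).add ((sin_aff_deriv (k₀ * ρ) (-k₀) x).div_const k₀)).const_mul C
              refine h1.congr_deriv ?_
              field_simp
              ring
            have hux : u x = C * (1 - Real.cos (k₀ * ρ + (-k₀) * x)) := by
              rw [hu x, if_pos ⟨by linarith [hx.1], hx.2⟩, abs_of_nonneg hx.1]
              ring_nf
            rw [hux]; exact hd
          have := intervalIntegral.integral_eq_sub_of_hasDerivAt hF (hiu 0 ρ)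
          rw [this]
          have e1 : k₀ * ρ + -k₀ * ρ = 0 := by ring
          simp only [e1, Real.sin_zero, mul_zero, zero_div, add_zero, zero_add]
          field_simp
        have hleft : (∫ x in (-ρ)..(0:ℝ), u x) = C * (ρ - Real.sin (k₀ * ρ) / k₀) := by
          have hF : ∀ x ∈ uIcc (-ρ) (0:ℝ),
              HasDerivAt (fun y => C * (y - Real.sin (k₀ * ρ + k₀ * y) / k₀)) (u x) x := by
            intro x hx
            rw [uIcc_of_le (by linarith)] at hx
            have hd : HasDerivAt (fun y => C * (y - Real.sin (k₀ * ρ + k₀ * y) / k₀))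
                (C * (1 - Real.cos (k₀ * ρ + k₀ * x))) x := by
              have h1 := ((hasDerivAt_id x).sub ((sin_aff_deriv (k₀ * ρ) k₀ x).div_const k₀)).const_mul C
              refine h1.congr_deriv ?_
              field_simp
            have hux : u x = C * (1 - Real.cos (k₀ * ρ + k₀ * x)) := by
              rw [hu x, if_pos ⟨hx.1, by linarith [hx.2]⟩, abs_of_nonpos hx.2]
              ring_nf
            rw [hux]; exact hd
          have := intervalIntegral.integral_eq_sub_of_hasDerivAt hF (hiu (-ρ) 0)
          rw [this]
          have e2 : k₀ * ρ + k₀ * -ρ = 0 := by ring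
          simp only [e2, Real.sin_zero, mul_zero, zero_div, add_zero, zero_add, sub_zero]
          field_simp
          ring
        rw [hsplit, hleft, hright]; ring
      rw [hint, hu0, ha, hC]
      rw [show (2:ℝ) * k₀ * ρ = 2 * (k₀ * ρ) by ring, Real.sin_two_mul]
      field_simp
      linear_combination (2 * Z * Real.sin (k₀ * ρ)) * hchar
end

section
/- Let q(x) = c e^{−μ|x|} with μ > 0, c ∈ ℂ, and λ = k² with Im k ≥ 0, λ ≠ −μ². The function u_λ(x) = (1 − c/(μ²+λ))e^{ik|x|} + q(x)/(μ²+λ) satisfies −u_λ'' − λ u_λ + u_λ(0) q = 0 for x ≠ 0 (where u_λ(0) = 1). In particular, u_λ ∈ L²(ℝ) for real k ≠ 0 if and only if c = μ² + λ, in which case λ = c − μ² and u_λ(x) = e^{−μ|x|}. -/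
open MeasureTheory Filter Set Complex
open Topology

lemma expR (a : ℂ) (x : ℝ) :
    HasDerivAt (fun y : ℝ => Complex.exp (a * y)) (a * Complex.exp (a * x)) x := by
  have h := ((hasDerivAt_id ((x : ℝ) : ℂ)).const_mul a).cexp
  simpa [mul_comm] using h.comp_ofReal

lemma aux_int {b : ℝ} (hb : 0 < b) :
    Integrable (fun x : ℝ => Real.exp (-b * |x|)) := by
  have hIoi : IntegrableOn (fun x : ℝ => Real.exp (-b * |x|)) (Ioi 0) := by
    refine (exp_neg_integrableOn_Ioi 0 hb).congr_fun (fun x hx => ?_) measurableSet_Ioi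
    rw [abs_of_pos hx]
  have hIic : IntegrableOn (fun x : ℝ => Real.exp (-b * |x|)) (Iic 0) := by
    rw [IntegrableOn, ← Measure.map_neg_eq_self (volume : Measure ℝ)]
    have m : MeasurableEmbedding fun x : ℝ => -x := (Homeomorph.neg ℝ).measurableEmbedding
    rw [Measure.restrict_map m.measurable measurableSet_Iic, m.integrable_map_iff]
    simp_rw [Function.comp_def, abs_neg, neg_preimage, neg_Iic, neg_zero]
    exact Iff.mpr integrableOn_Ici_iff_integrableOn_Ioi hIoi
  have h := hIic.union hIoi
  rwa [Iic_union_Ioi, integrableOn_univ] at h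

lemma key_deriv (k : ℂ) (μ : ℝ) (p a r b : ℂ) (x : ℝ) :
    HasDerivAt (fun y : ℝ => p * Complex.exp (a * y) + r * Complex.exp (b * y))
      (p * a * Complex.exp (a * x) + r * b * Complex.exp (b * x)) x := by
  have h1 := (expR a x).const_mul p
  have h2 := (expR b x).const_mul r
  exact (h1.add h2).congr_deriv (by ring)


/-- for `q(x) = c e^{-μ|x|}` (`μ > 0`), `λ = k²` with `Im k ≥ 0`, `λ ≠ -μ²`,
the function `u_λ(x) = (1 - c/(μ²+λ)) e^{ik|x|} + q(x)/(μ²+λ)` satisfies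
`-u'' - λ u + u(0) q = 0` off `0` (with `u(0) = 1`); and for real `k ≠ 0`,
`u_λ ∈ L²(ℝ)` iff `c = μ² + λ`, in which case `u_λ(x) = e^{-μ|x|}`. -/
theorem stmt17 (μ : ℝ) (hμ : 0 < μ) (c k : ℂ) (hkim : 0 ≤ k.im)
    (hlam : k ^ 2 ≠ -(μ : ℂ) ^ 2)
    (q : ℝ → ℂ) (hq : ∀ x : ℝ, q x = c * Complex.exp (-(μ : ℂ) * |x|))
    (u : ℝ → ℂ)
    (hu : ∀ x : ℝ, u x = (1 - c / ((μ : ℂ) ^ 2 + k ^ 2)) * Complex.exp (Complex.I * k * |x|)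
            + q x / ((μ : ℂ) ^ 2 + k ^ 2)) :
    u 0 = 1 ∧
    (∃ u' u'' : ℝ → ℂ,
      (∀ x : ℝ, x ≠ 0 → HasDerivAt u (u' x) x) ∧
      (∀ x : ℝ, x ≠ 0 → HasDerivAt u' (u'' x) x) ∧
      (∀ x : ℝ, x ≠ 0 → -u'' x - k ^ 2 * u x + u 0 * q x = 0)) ∧
    (k.im = 0 → k ≠ 0 →
      ((MemLp u 2 (volume : Measure ℝ) ↔ c = (μ : ℂ) ^ 2 + k ^ 2) ∧
       (c = (μ : ℂ) ^ 2 + k ^ 2 → ∀ x : ℝ, u x = Complex.exp (-(μ : ℂ) * |x|)))) := by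
  have hD : (μ : ℂ) ^ 2 + k ^ 2 ≠ 0 := fun h => hlam (by linear_combination h)
  set A : ℂ := 1 - c / ((μ : ℂ) ^ 2 + k ^ 2) with hAdef
  set B : ℂ := c / ((μ : ℂ) ^ 2 + k ^ 2) with hBdef
  have huAB : ∀ x : ℝ, u x = A * Complex.exp (Complex.I * k * |x|)
      + B * Complex.exp (-(μ : ℂ) * |x|) := by
    intro x
    rw [hu x, hq x, hAdef, hBdef]
    ring
  have hAB1 : A + B = 1 := by rw [hAdef, hBdef]; ring
  have u0 : u 0 = 1 := by
    rw [huAB 0]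
    simp only [abs_zero, Complex.ofReal_zero, mul_zero, Complex.exp_zero, mul_one]
    exact hAB1
  have e1 : ∀ y : ℝ, Complex.I * k * ((-y : ℝ) : ℂ) = -(Complex.I * k) * (y : ℂ) := by
    intro y; push_cast; ring
  have e2 : ∀ y : ℝ, -(μ : ℂ) * ((-y : ℝ) : ℂ) = (μ : ℂ) * (y : ℂ) := by
    intro y; push_cast; ring
  refine ⟨u0, ?_, ?_⟩
  · refine ⟨fun x => (if 0 < x then 1 else -1 : ℂ) *
        (A * (Complex.I * k) * Complex.exp (Complex.I * k * |x|)
          - (μ : ℂ) * B * Complex.exp (-(μ : ℂ) * |x|)),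
      fun x => A * (Complex.I * k) ^ 2 * Complex.exp (Complex.I * k * |x|)
          + (μ : ℂ) ^ 2 * B * Complex.exp (-(μ : ℂ) * |x|), ?_, ?_, ?_⟩
    · intro x hx
      rcases hx.lt_or_gt with hneg | hpos
      · have hev : u =ᶠ[𝓝 x] fun y : ℝ =>
            A * Complex.exp (-(Complex.I * k) * y) + B * Complex.exp ((μ : ℂ) * y) := by
          filter_upwards [Iio_mem_nhds hneg] with y hy
          rw [huAB y, abs_of_neg hy, e1 y, e2 y]
        have hd := (key_deriv k μ A (-(Complex.I * k)) B ((μ : ℂ)) x).congr_of_eventuallyEq hev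
        refine hd.congr_deriv ?_
        simp only [if_neg (not_lt.2 hneg.le), abs_of_neg hneg, e1 x, e2 x]
        ring
      · have hev : u =ᶠ[𝓝 x] fun y : ℝ =>
            A * Complex.exp ((Complex.I * k) * y) + B * Complex.exp (-(μ : ℂ) * y) := by
          filter_upwards [Ioi_mem_nhds hpos] with y hy
          rw [huAB y, abs_of_pos hy]
        have hd := (key_deriv k μ A (Complex.I * k) B (-(μ : ℂ)) x).congr_of_eventuallyEq hev
        refine hd.congr_deriv ?_
        simp only [if_pos hpos, abs_of_pos hpos]
        ring
    · intro x hx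
      rcases hx.lt_or_gt with hneg | hpos
      · have hev : (fun x : ℝ => (if 0 < x then 1 else -1 : ℂ) *
            (A * (Complex.I * k) * Complex.exp (Complex.I * k * |x|)
              - (μ : ℂ) * B * Complex.exp (-(μ : ℂ) * |x|))) =ᶠ[𝓝 x] fun y : ℝ =>
            (-(A * (Complex.I * k))) * Complex.exp (-(Complex.I * k) * y)
              + ((μ : ℂ) * B) * Complex.exp ((μ : ℂ) * y) := by
          filter_upwards [Iio_mem_nhds hneg] with y hy
          have hy' : y < 0 := hy
          simp only [if_neg (not_lt.2 hy'.le), abs_of_neg hy', e1 y, e2 y]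
          ring
        have hd := (key_deriv k μ (-(A * (Complex.I * k))) (-(Complex.I * k))
          ((μ : ℂ) * B) ((μ : ℂ)) x).congr_of_eventuallyEq hev
        refine hd.congr_deriv ?_
        simp only [abs_of_neg hneg, e1 x, e2 x]
        ring
      · have hev : (fun x : ℝ => (if 0 < x then 1 else -1 : ℂ) *
            (A * (Complex.I * k) * Complex.exp (Complex.I * k * |x|)
              - (μ : ℂ) * B * Complex.exp (-(μ : ℂ) * |x|))) =ᶠ[𝓝 x] fun y : ℝ =>
            (A * (Complex.I * k)) * Complex.exp ((Complex.I * k) * y)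
              + (-((μ : ℂ) * B)) * Complex.exp (-(μ : ℂ) * y) := by
          filter_upwards [Ioi_mem_nhds hpos] with y hy
          have hy' : 0 < y := hy
          simp only [if_pos hy', abs_of_pos hy']
          ring
        have hd := (key_deriv k μ (A * (Complex.I * k)) (Complex.I * k)
          (-((μ : ℂ) * B)) (-(μ : ℂ)) x).congr_of_eventuallyEq hev
        refine hd.congr_deriv ?_
        simp only [abs_of_pos hpos]
        ring
    · intro x hx
      rw [huAB x, hq x, u0, one_mul]
      have hI : (Complex.I * k) ^ 2 = -k ^ 2 := by
        rw [mul_pow, Complex.I_sq]; ring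
      rw [hI, hAdef, hBdef]
      field_simp
      ring
  · intro him hkne
    have hnormE : ∀ x : ℝ, ‖Complex.exp (Complex.I * k * ((|x| : ℝ) : ℂ))‖ = 1 := by
      intro x
      have hre : (Complex.I * k * ((|x| : ℝ) : ℂ)).re = 0 := by
        simp [Complex.mul_re, Complex.mul_im, him]
      rw [Complex.norm_exp, hre, Real.exp_zero]
    have hnormF : ∀ x : ℝ, ‖Complex.exp (-(μ : ℂ) * ((|x| : ℝ) : ℂ))‖ = Real.exp (-μ * |x|) := by
      intro x
      have : -(μ : ℂ) * ((|x| : ℝ) : ℂ) = ((-μ * |x| : ℝ) : ℂ) := by push_cast; ring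
      rw [this, Complex.norm_exp, Complex.ofReal_re]
    have hsol : c = (μ : ℂ) ^ 2 + k ^ 2 → ∀ x : ℝ, u x = Complex.exp (-(μ : ℂ) * |x|) := by
      intro hc x
      rw [huAB x, hAdef, hBdef, hc, div_self hD]
      ring
    refine ⟨⟨?_, ?_⟩, hsol⟩
    · -- Memℒp → c = μ² + k²
      intro hMem
      by_contra hc
      have hA : A ≠ 0 := by
        rw [hAdef, sub_ne_zero]
        intro h
        exact hc ((div_eq_one_iff_eq hD).1 h.symm)
      have ha : 0 < ‖A‖ := norm_pos_iff.2 hA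
      have htend : Tendsto (fun x : ℝ => ‖B‖ * Real.exp (-μ * x)) atTop (𝓝 0) := by
        have h1 : Tendsto (fun x : ℝ => -μ * x) atTop atBot := by
          apply tendsto_id.const_mul_atTop_of_neg (by linarith : -μ < 0)
        have h2 := Real.tendsto_exp_atBot.comp h1
        simpa using h2.const_mul ‖B‖
      have hEv : ∀ᶠ x : ℝ in atTop, ‖B‖ * Real.exp (-μ * x) ≤ ‖A‖ / 2 ∧ 0 ≤ x := by
        filter_upwards [htend.eventually (gt_mem_nhds (half_pos ha)), eventually_ge_atTop 0]
          with x h1 h2 using ⟨h1.le, h2⟩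
      obtain ⟨R, hR⟩ := eventually_atTop.1 hEv
      have hR0 : 0 ≤ R := (hR R le_rfl).2
      have hlow : ∀ x : ℝ, x ∈ Ici R → ‖A‖ / 2 ≤ ‖u x‖ := by
        intro x hx
        have hx0 : 0 ≤ x := le_trans hR0 hx
        rw [huAB x]
        have h1 : ‖A * Complex.exp (Complex.I * k * ((|x| : ℝ) : ℂ))‖ = ‖A‖ := by
          rw [norm_mul, hnormE x, mul_one]
        have h2 : ‖B * Complex.exp (-(μ : ℂ) * ((|x| : ℝ) : ℂ))‖ = ‖B‖ * Real.exp (-μ * x) := by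
          rw [norm_mul, hnormF x, _root_.abs_of_nonneg hx0]
        have h3 : ‖A * Complex.exp (Complex.I * k * ((|x| : ℝ) : ℂ))‖
            - ‖B * Complex.exp (-(μ : ℂ) * ((|x| : ℝ) : ℂ))‖
            ≤ ‖A * Complex.exp (Complex.I * k * ((|x| : ℝ) : ℂ))
              + B * Complex.exp (-(μ : ℂ) * ((|x| : ℝ) : ℂ))‖ := by
          have h4 := norm_sub_le (A * Complex.exp (Complex.I * k * ((|x| : ℝ) : ℂ))
              + B * Complex.exp (-(μ : ℂ) * ((|x| : ℝ) : ℂ)))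
              (B * Complex.exp (-(μ : ℂ) * ((|x| : ℝ) : ℂ)))
          rw [add_sub_cancel_right] at h4
          linarith
        have h5 := (hR x hx).1
        rw [h1, h2] at h3
        linarith
      have hMemR := hMem.restrict (Ici R)
      have hint := (memLp_two_iff_integrable_sq_norm hMemR.1).1 hMemR
      have hconst : Integrable (fun _ : ℝ => (‖A‖ / 2) ^ 2) (volume.restrict (Ici R)) := by
        refine hint.mono' aestronglyMeasurable_const ?_
        refine (ae_restrict_iff' measurableSet_Ici).2 (ae_of_all _ fun x hx => ?_)
        rw [Real.norm_eq_abs, _root_.abs_of_nonneg (by positivity)]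
        exact pow_le_pow_left₀ (by positivity) (hlow x hx) 2
      rcases (integrable_const_iff).1 hconst with h | h
      · exact absurd h (by positivity)
      · have h := h.measure_univ_lt_top; rw [Measure.restrict_apply_univ, Real.volume_Ici] at h
        exact absurd h (by simp)
    · -- c = μ² + k² → Memℒp
      intro hc
      have hu' : u = fun x : ℝ => Complex.exp (-(μ : ℂ) * |x|) := funext (hsol hc)
      rw [hu']
      have hcont : Continuous fun x : ℝ => Complex.exp (-(μ : ℂ) * ((|x| : ℝ) : ℂ)) := by
        apply Complex.continuous_exp.comp
        exact (continuous_const.mul (Complex.continuous_ofReal.comp continuous_abs))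
      refine (memLp_two_iff_integrable_sq_norm hcont.aestronglyMeasurable).2 ?_
      have hint := aux_int (b := 2 * μ) (by positivity)
      apply hint.congr (ae_of_all _ fun x => ?_)
      have h2 : ‖Complex.exp (-(μ : ℂ) * ((|x| : ℝ) : ℂ))‖ ^ 2 = Real.exp (-(2 * μ) * |x|) := by
        rw [hnormF x, sq, ← Real.exp_add]
        congr 1
        ring
      exact h2.symm
end
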